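/- arXiv:1503.04879 — 4 statements merged into one kernel-verified Lean document; each statement's English description precedes it below -/
import Mathlib

section
/- Maximum principle. Let H satisfy Condition A and f ∈ C(Ω×ℝ). Let J = {c ∈ ℝ : f(x,c)=0 for some x ∈ Ω}, c_inf = inf J, c_sup = sup J, and assume −∞ < c_inf ≤ c_sup < ∞. (i) Suppose f ≤ 0 on Ω×ℝ and u ∈ usc(Ω̄) solves H(Du,D²u)+f(x,u) ≥ 0 in Ω in the viscosity sense. If sup_{∂Ω} u > c_sup or sup_Ω u < c_inf, then u(x) < sup_{∂Ω} u for all x ∈ Ω and sup_{Ω̄} u = sup_{∂Ω} u. (ii) Suppose f ≥ 0 on Ω×ℝ and u ∈ lsc(Ω̄) solves H(Du,D²u)+f(x,u) ≤ 0 in Ω. If inf_{∂Ω} u < c_inf or inf_Ω u > c_sup, then u(x) > inf_{∂Ω} u for all x ∈ Ω and inf_{Ω̄} u = inf_{∂Ω} u. Moreover, if in (i) f(x,t) < 0 for all (x,t) (respectively in (ii) f(x,t) > 0 for all (x,t)), then the corresponding conclusions hold for every u ∈ usc(Ω̄) (resp. u ∈ lsc(Ω̄)) without the stated restrictions on the values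 of u. -/
open Real Set Filter Matrix MeasureTheory

noncomputable section

abbrev EucSp (n : ℕ) := EuclideanSpace ℝ (Fin n)
abbrev Mat (n : ℕ) := Matrix (Fin n) (Fin n) ℝ

/-- A bounded domain: a nonempty bounded open connected set. -/
def IsBoundedDomain {n : ℕ} (Ω : Set (EucSp n)) : Prop :=
  IsOpen Ω ∧ IsConnected Ω ∧ Bornology.IsBounded Ω

/-- The Hessian matrix of `ψ` at `y`. -/
def hessianAt {n : ℕ} (ψ : EucSp n → ℝ) (y : EucSp n) : Mat n :=
  fun i j => iteratedFDeriv ℝ 2 ψ y ![EuclideanSpace.single i 1, EuclideanSpace.single j 1]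

/-- Viscosity sub-solution of `H(Du, D²u) + f(x,u) = 0` in `Ω`. -/
def ViscSubSoln {n : ℕ} (H : EucSp n → Mat n → ℝ) (f : EucSp n → ℝ → ℝ)
    (Ω : Set (EucSp n)) (u : EucSp n → ℝ) : Prop :=
  ∀ ψ : EucSp n → ℝ, ∀ y ∈ Ω, ContDiffAt ℝ 2 ψ y →
    IsLocalMax (fun x => u x - ψ x) y →
    0 ≤ H (gradient ψ y) (hessianAt ψ y) + f y (u y)

/-- Viscosity super-solution of `H(Du, D²u) + f(x,u) = 0` in `Ω`. -/
def ViscSuperSoln {n : ℕ} (H : EucSp n → Mat n → ℝ) (f : EucSp n → ℝ → ℝ)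
    (Ω : Set (EucSp n)) (u : EucSp n → ℝ) : Prop :=
  ∀ ψ : EucSp n → ℝ, ∀ y ∈ Ω, ContDiffAt ℝ 2 ψ y →
    IsLocalMin (fun x => u x - ψ x) y →
    H (gradient ψ y) (hessianAt ψ y) + f y (u y) ≤ 0

def ViscSoln {n : ℕ} (H : EucSp n → Mat n → ℝ) (f : EucSp n → ℝ → ℝ)
    (Ω : Set (EucSp n)) (u : EucSp n → ℝ) : Prop :=
  ViscSubSoln H f Ω u ∧ ViscSuperSoln H f Ω u

/-- `u ∈ C(closure Ω)` solves `H + f = 0` in `Ω` with `u = h` on `∂Ω`. -/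
def SolvesBVP {n : ℕ} (H : EucSp n → Mat n → ℝ) (f : EucSp n → ℝ → ℝ)
    (Ω : Set (EucSp n)) (u h : EucSp n → ℝ) : Prop :=
  ContinuousOn u (closure Ω) ∧ ViscSoln H f Ω u ∧ ∀ x ∈ frontier Ω, u x = h x

/-- Condition A (monotonicity). -/
def CondA {n : ℕ} (H : EucSp n → Mat n → ℝ) : Prop :=
  (∀ p, H p 0 = 0) ∧
  ∀ (p : EucSp n) (X Y : Mat n), X.IsSymm → Y.IsSymm → (Y - X).PosSemidef → H p X ≤ H p Y

/-- Condition B (homogeneity). -/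
def CondB {n : ℕ} (H : EucSp n → Mat n → ℝ) (k₁ k₂ : ℝ) : Prop :=
  0 ≤ k₁ ∧ 0 < k₂ ∧
  (∀ (θ : ℝ) (p : EucSp n) (X : Mat n), H (θ • p) X = |θ| ^ k₁ * H p X) ∧
  (∀ θ : ℝ, 0 < θ → ∀ (p : EucSp n) (X : Mat n), H p (θ • X) = θ ^ k₂ * H p X)

/-- The rank-one matrix `e ⊗ e`. -/
def outer {n : ℕ} (e : EucSp n) : Mat n := fun i j => e i * e j

def m1 {n : ℕ} (H : EucSp n → Mat n → ℝ) (s : ℝ) : ℝ :=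
  min (sInf {r | ∃ e : EucSp n, ‖e‖ = 1 ∧ r = H e (1 - s • outer e)})
      (-sSup {r | ∃ e : EucSp n, ‖e‖ = 1 ∧ r = H e (s • outer e - 1)})

def m2 {n : ℕ} (H : EucSp n → Mat n → ℝ) (s : ℝ) : ℝ :=
  max (sSup {r | ∃ e : EucSp n, ‖e‖ = 1 ∧ r = H e (1 - s • outer e)})
      (-sInf {r | ∃ e : EucSp n, ‖e‖ = 1 ∧ r = H e (s • outer e - 1)})

/-- Condition C (coercivity). -/
def CondC {n : ℕ} (H : EucSp n → Mat n → ℝ) (k₁ k₂ : ℝ) : Prop :=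
  0 < m1 H (k₁ / (k₁ + k₂)) ∧
  ∃ s₁ s₀ ℓ : ℝ, s₁ ≤ 1 ∧ 1 ≤ s₀ ∧ 0 < ℓ ∧
    (∀ s ≤ s₁, 0 < m1 H s) ∧ (∀ s, s₀ ≤ s → m2 H s < -ℓ)

def alphaC (k₁ k₂ : ℝ) : ℝ := (k₁ + 2 * k₂) / (k₁ + k₂)

def sigmaC {n : ℕ} (H : EucSp n → Mat n → ℝ) (k₁ k₂ : ℝ) : ℝ :=
  1 / (alphaC k₁ k₂ * m1 H (k₁ / (k₁ + k₂)) ^ (1 / (k₁ + k₂)))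

/-- Condition (i*). -/
def CondIStar {n : ℕ} (H : EucSp n → Mat n → ℝ) : Prop :=
  ∃ s : ℝ, 1 < s ∧ s < 2 ∧ m2 H s < 0

/-- Condition (ii*). -/
def CondIIStar {n : ℕ} (H : EucSp n → Mat n → ℝ) : Prop :=
  ∃ s : ℝ, 2 ≤ s ∧ ∀ t, s < t → m2 H t < 0

/-- Uniform outer ball condition with radius `ρ`. -/
def UnifOuterBall {n : ℕ} (Ω : Set (EucSp n)) (ρ : ℝ) : Prop :=
  ∀ y ∈ frontier Ω, ∃ z : EucSp n, Metric.ball z ρ ⊆ Ωᶜ ∧ y ∈ Metric.sphere z ρ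

/-- Standing assumption (*). -/
def Standing {n : ℕ} (H : EucSp n → Mat n → ℝ) (Ω : Set (EucSp n)) : Prop :=
  CondIStar H ∨ (CondIIStar H ∧ ∃ ρ > 0, UnifOuterBall Ω ρ)

/-- `spow t k = |t|^(k-1) t`. -/
def spow (t k : ℝ) : ℝ := |t| ^ (k - 1) * t

/-- The set of `λ > 0` such that `H(Du,D²u) + λ a(x)|u|^{k-1}u = 0` in `Ω`, `u = δ` on `∂Ω`,
has a positive solution. -/
def eigenSet {n : ℕ} (H : EucSp n → Mat n → ℝ) (Ω : Set (EucSp n)) (a : EucSp n → ℝ)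
    (k δ : ℝ) : Set ℝ :=
  {l : ℝ | 0 < l ∧ ∃ u : EucSp n → ℝ,
    SolvesBVP H (fun x t => l * a x * spow t k) Ω u (fun _ => δ) ∧
    ∀ x ∈ closure Ω, 0 < u x}

def lamOmega {n : ℕ} (H : EucSp n → Mat n → ℝ) (Ω : Set (EucSp n)) (a : EucSp n → ℝ)
    (k δ : ℝ) : ℝ :=
  sSup (eigenSet H Ω a k δ)

def toVec {n : ℕ} (p : EucSp n) : Fin n → ℝ := p
def ofVec {n : ℕ} (v : Fin n → ℝ) : EucSp n := WithLp.toLp 2 v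

/-- Condition D (invariance under rotations and reflections). -/
def CondD {n : ℕ} (H : EucSp n → Mat n → ℝ) : Prop :=
  ∀ Q : Mat n, Qᵀ * Q = 1 →
    ∀ (p : EucSp n) (X : Mat n), H (ofVec (Q.mulVec (toVec p))) (Q * X * Qᵀ) = H p X


/-- USC extreme value theorem. -/
lemma usc_exists_max {X : Type*} [TopologicalSpace X] {s : Set X} (hs : IsCompact s)
    (hne : s.Nonempty) {u : X → ℝ} (hu : UpperSemicontinuousOn u s) :
    ∃ y ∈ s, ∀ x ∈ s, u x ≤ u y := by
  by_contra h
  push_neg at h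
  choose z hzs hzlt using h
  have hU : ∀ y (hy : y ∈ s), {x | x ∈ s → u x < u (z y hy)} ∈ nhds y := by
    intro y hy
    have := hu y hy (u (z y hy)) (hzlt y hy)
    rw [eventually_nhdsWithin_iff] at this
    exact this
  obtain ⟨t, ht⟩ := hs.elim_nhds_subcover' (fun y hy => {x | x ∈ s → u x < u (z y hy)}) hU
  have htne : t.Nonempty := by
    obtain ⟨x, hx⟩ := hne
    obtain ⟨y, hy, -⟩ := Set.mem_iUnion₂.mp (ht hx)
    exact ⟨y, hy⟩
  obtain ⟨y₀, hy₀t, hy₀max⟩ := t.exists_max_image (fun y => u (z y.1 y.2)) htne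
  have hz0 : z y₀.1 y₀.2 ∈ s := hzs _ _
  obtain ⟨y₁, hy₁t, hy₁⟩ := Set.mem_iUnion₂.mp (ht hz0)
  exact absurd (hy₀max y₁ hy₁t) (not_le.mpr (hy₁ hz0))

lemma lsc_exists_min {X : Type*} [TopologicalSpace X] {s : Set X} (hs : IsCompact s)
    (hne : s.Nonempty) {u : X → ℝ} (hu : LowerSemicontinuousOn u s) :
    ∃ y ∈ s, ∀ x ∈ s, u y ≤ u x := by
  have husc : UpperSemicontinuousOn (fun x => -u x) s := by
    intro x hx c hc
    have : -c < u x := by simpa using neg_lt_of_neg_lt hc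
    exact (hu x hx (-c) this).mono fun y hy => by simpa using neg_lt_of_neg_lt hy
  obtain ⟨y, hy, hmax⟩ := usc_exists_max hs hne husc
  exact ⟨y, hy, fun x hx => by have := hmax x hx; simpa using this⟩

lemma frontier_nonempty {n : ℕ} (hn : 2 ≤ n) {Ω : Set (EucSp n)}
    (hΩ : IsBoundedDomain Ω) : (frontier Ω).Nonempty := by
  haveI : Nonempty (Fin n) := ⟨⟨0, by omega⟩⟩
  haveI : Nontrivial (EucSp n) := by
    refine ⟨EuclideanSpace.single ⟨0, by omega⟩ (1 : ℝ), 0, fun h => ?_⟩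
    have := congrArg (fun v : EucSp n => v ⟨0, by omega⟩) h
    simp [EuclideanSpace.single_apply] at this
  haveI : PreconnectedSpace (EucSp n) := ⟨((convex_univ : Convex ℝ (Set.univ : Set (EucSp n)))).isPreconnected⟩
  rcases Set.eq_empty_or_nonempty (frontier Ω) with h | h
  · exfalso
    rcases frontier_eq_empty_iff.mp h with h' | h'
    · exact hΩ.2.1.nonempty.ne_empty h'
    · exact NormedSpace.unbounded_univ ℝ (EucSp n) (h' ▸ hΩ.2.2)
  · exact h

/-- At an interior max point of a viscosity subsolution, `f y (u y) ≥ 0`. -/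
lemma subsoln_interior_max {n : ℕ} {H : EucSp n → Mat n → ℝ} (hA : CondA H)
    {f : EucSp n → ℝ → ℝ} {Ω : Set (EucSp n)} (hΩo : IsOpen Ω) {u : EucSp n → ℝ}
    (hsub : ViscSubSoln H f Ω u) {y : EucSp n} (hy : y ∈ Ω)
    (hmax : ∀ x ∈ closure Ω, u x ≤ u y) : 0 ≤ f y (u y) := by
  have hloc : IsLocalMax (fun x => u x - (fun _ : EucSp n => (0:ℝ)) x) y :=
    Filter.eventually_of_mem (hΩo.mem_nhds hy)
      (fun x hx => by simpa using hmax x (subset_closure hx))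
  have := hsub (fun _ => (0:ℝ)) y hy contDiffAt_const hloc
  have hgrad : gradient (fun _ : EucSp n => (0:ℝ)) y = 0 := gradient_const y 0
  have hhess : hessianAt (fun _ : EucSp n => (0:ℝ)) y = 0 := by
    funext i j
    simp [hessianAt, iteratedFDeriv_zero_fun]
  rw [hgrad, hhess, hA.1 0, zero_add] at this
  exact this

lemma supersoln_interior_min {n : ℕ} {H : EucSp n → Mat n → ℝ} (hA : CondA H)
    {f : EucSp n → ℝ → ℝ} {Ω : Set (EucSp n)} (hΩo : IsOpen Ω) {u : EucSp n → ℝ}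
    (hsup : ViscSuperSoln H f Ω u) {y : EucSp n} (hy : y ∈ Ω)
    (hmin : ∀ x ∈ closure Ω, u y ≤ u x) : f y (u y) ≤ 0 := by
  have hloc : IsLocalMin (fun x => u x - (fun _ : EucSp n => (0:ℝ)) x) y :=
    Filter.eventually_of_mem (hΩo.mem_nhds hy)
      (fun x hx => by simpa using hmin x (subset_closure hx))
  have := hsup (fun _ => (0:ℝ)) y hy contDiffAt_const hloc
  have hgrad : gradient (fun _ : EucSp n => (0:ℝ)) y = 0 := gradient_const y 0
  have hhess : hessianAt (fun _ : EucSp n => (0:ℝ)) y = 0 := by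
    funext i j
    simp [hessianAt, iteratedFDeriv_zero_fun]
  rw [hgrad, hhess, hA.1 0, zero_add] at this
  exact this


lemma max_principle_aux {n : ℕ} (hn : 2 ≤ n) {Ω : Set (EucSp n)} (hΩ : IsBoundedDomain Ω)
    {u : EucSp n → ℝ} (hu : UpperSemicontinuousOn u (closure Ω))
    (hno : ∀ y ∈ Ω, (∀ x ∈ closure Ω, u x ≤ u y) → False) :
    (∀ x ∈ Ω, u x < sSup (u '' frontier Ω)) ∧
      sSup (u '' closure Ω) = sSup (u '' frontier Ω) := by
  have hK : IsCompact (closure Ω) :=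
    Metric.isCompact_of_isClosed_isBounded isClosed_closure hΩ.2.2.closure
  have hne : (closure Ω).Nonempty := hΩ.2.1.nonempty.closure
  obtain ⟨y, hyK, hymax⟩ := usc_exists_max hK hne hu
  have hynot : y ∉ Ω := fun h => hno y h hymax
  have hyfr : y ∈ frontier Ω := by
    rw [hΩ.1.frontier_eq]
    exact ⟨hyK, hynot⟩
  have hfrK : frontier Ω ⊆ closure Ω := frontier_subset_closure
  have hfrne : (u '' frontier Ω).Nonempty := ⟨u y, Set.mem_image_of_mem u hyfr⟩
  have hbd : ∀ a ∈ u '' frontier Ω, a ≤ u y := by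
    rintro a ⟨x, hx, rfl⟩; exact hymax x (hfrK hx)
  have hSle : sSup (u '' frontier Ω) ≤ u y := csSup_le hfrne hbd
  have hyS : u y ≤ sSup (u '' frontier Ω) :=
    le_csSup ⟨u y, hbd⟩ (Set.mem_image_of_mem u hyfr)
  have hSy : sSup (u '' frontier Ω) = u y := le_antisymm hSle hyS
  constructor
  · intro x hx
    rcases lt_or_eq_of_le (hymax x (subset_closure hx)) with h | h
    · rw [hSy]; exact h
    · exact absurd (fun z hz => (hymax z hz).trans h.ge) (hno x hx)
  · have hbd' : ∀ a ∈ u '' closure Ω, a ≤ u y := by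
      rintro a ⟨x, hx, rfl⟩; exact hymax x hx
    have h1 : sSup (u '' closure Ω) ≤ u y :=
      csSup_le ⟨u y, Set.mem_image_of_mem u hyK⟩ hbd'
    have h2 : u y ≤ sSup (u '' closure Ω ) :=
      le_csSup ⟨u y, hbd'⟩ (Set.mem_image_of_mem u hyK)
    rw [hSy]; exact le_antisymm h1 h2

lemma min_principle_aux {n : ℕ} (hn : 2 ≤ n) {Ω : Set (EucSp n)} (hΩ : IsBoundedDomain Ω)
    {u : EucSp n → ℝ} (hu : LowerSemicontinuousOn u (closure Ω))
    (hno : ∀ y ∈ Ω, (∀ x ∈ closure Ω, u y ≤ u x) → False) :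
    (∀ x ∈ Ω, sInf (u '' frontier Ω) < u x) ∧
      sInf (u '' closure Ω) = sInf (u '' frontier Ω) := by
  have hK : IsCompact (closure Ω) :=
    Metric.isCompact_of_isClosed_isBounded isClosed_closure hΩ.2.2.closure
  have hne : (closure Ω).Nonempty := hΩ.2.1.nonempty.closure
  obtain ⟨y, hyK, hymin⟩ := lsc_exists_min hK hne hu
  have hynot : y ∉ Ω := fun h => hno y h hymin
  have hyfr : y ∈ frontier Ω := by
    rw [hΩ.1.frontier_eq]
    exact ⟨hyK, hynot⟩
  have hfrK : frontier Ω ⊆ closure Ω := frontier_subset_closure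
  have hfrne : (u '' frontier Ω).Nonempty := ⟨u y, Set.mem_image_of_mem u hyfr⟩
  have hbd : ∀ a ∈ u '' frontier Ω, u y ≤ a := by
    rintro a ⟨x, hx, rfl⟩; exact hymin x (hfrK hx)
  have hSle : u y ≤ sInf (u '' frontier Ω) := le_csInf hfrne hbd
  have hyS : sInf (u '' frontier Ω) ≤ u y :=
    csInf_le ⟨u y, hbd⟩ (Set.mem_image_of_mem u hyfr)
  have hSy : sInf (u '' frontier Ω) = u y := le_antisymm hyS hSle
  constructor
  · intro x hx
    rcases lt_or_eq_of_le (hymin x (subset_closure hx)) with h | h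
    · rw [hSy]; exact h
    · exact absurd (fun z hz => h.ge.trans (hymin z hz)) (hno x hx)
  · have hbd' : ∀ a ∈ u '' closure Ω, u y ≤ a := by
      rintro a ⟨x, hx, rfl⟩; exact hymin x hx
    have h1 : u y ≤ sInf (u '' closure Ω) :=
      le_csInf ⟨u y, Set.mem_image_of_mem u hyK⟩ hbd'
    have h2 : sInf (u '' closure Ω) ≤ u y :=
      csInf_le ⟨u y, hbd'⟩ (Set.mem_image_of_mem u hyK)
    rw [hSy]; exact le_antisymm h2 h1

/-- Maximum principle (Lemma 4.2). -/
theorem stmt_1 {n : ℕ} (hn : 2 ≤ n) (Ω : Set (EucSp n)) (hΩ : IsBoundedDomain Ω)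
    (H : EucSp n → Mat n → ℝ) (hH : Continuous fun q : EucSp n × Mat n => H q.1 q.2)
    (hA : CondA H)
    (f : EucSp n → ℝ → ℝ)
    (hf : ContinuousOn (fun q : EucSp n × ℝ => f q.1 q.2) (Ω ×ˢ (univ : Set ℝ)))
    (J : Set ℝ) (hJ : J = {c : ℝ | ∃ x ∈ Ω, f x c = 0})
    (hJne : J.Nonempty) (hJbddA : BddAbove J) (hJbddB : BddBelow J) :
    ((∀ x ∈ Ω, ∀ t : ℝ, f x t ≤ 0) →
      ∀ u : EucSp n → ℝ, UpperSemicontinuousOn u (closure Ω) → ViscSubSoln H f Ω u →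
        (sSup J < sSup (u '' frontier Ω) ∨ sSup (u '' Ω) < sInf J) →
        (∀ x ∈ Ω, u x < sSup (u '' frontier Ω)) ∧
          sSup (u '' closure Ω) = sSup (u '' frontier Ω)) ∧
    ((∀ x ∈ Ω, ∀ t : ℝ, 0 ≤ f x t) →
      ∀ u : EucSp n → ℝ, LowerSemicontinuousOn u (closure Ω) → ViscSuperSoln H f Ω u →
        (sInf (u '' frontier Ω) < sInf J ∨ sSup J < sInf (u '' Ω)) →
        (∀ x ∈ Ω, sInf (u '' frontier Ω) < u x) ∧
          sInf (u '' closure Ω) = sInf (u '' frontier Ω)) ∧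
    ((∀ x ∈ Ω, ∀ t : ℝ, f x t < 0) →
      ∀ u : EucSp n → ℝ, UpperSemicontinuousOn u (closure Ω) → ViscSubSoln H f Ω u →
        (∀ x ∈ Ω, u x < sSup (u '' frontier Ω)) ∧
          sSup (u '' closure Ω) = sSup (u '' frontier Ω)) ∧
    ((∀ x ∈ Ω, ∀ t : ℝ, 0 < f x t) →
      ∀ u : EucSp n → ℝ, LowerSemicontinuousOn u (closure Ω) → ViscSuperSoln H f Ω u →
        (∀ x ∈ Ω, sInf (u '' frontier Ω) < u x) ∧
          sInf (u '' closure Ω) = sInf (u '' frontier Ω)) := by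
  obtain ⟨hΩo, hΩc, hΩb⟩ := hΩ
  have hΩ' : IsBoundedDomain Ω := ⟨hΩo, hΩc, hΩb⟩
  have hfrne := frontier_nonempty hn hΩ'
  have hfrK : frontier Ω ⊆ closure Ω := frontier_subset_closure
  refine ⟨?_, ?_, ?_, ?_⟩
  · -- (i)
    intro hfle u hu hsub hdisj
    refine max_principle_aux hn hΩ' hu ?_
    intro y hy hmax
    have h0 : 0 ≤ f y (u y) := subsoln_interior_max hA hΩo hsub hy hmax
    have hf0 : f y (u y) = 0 := le_antisymm (hfle y hy (u y)) h0
    have hyJ : u y ∈ J := by rw [hJ]; exact ⟨y, hy, hf0⟩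
    have hubd : ∀ a ∈ u '' frontier Ω, a ≤ u y := by
      rintro a ⟨x, hx, rfl⟩; exact hmax x (hfrK hx)
    rcases hdisj with h | h
    · have h1 : sSup (u '' frontier Ω) ≤ u y :=
        csSup_le (hfrne.image u) hubd
      have h2 : u y ≤ sSup J := le_csSup hJbddA hyJ
      linarith
    · have h1 : u y ≤ sSup (u '' Ω) := by
        refine le_csSup ⟨u y, ?_⟩ (Set.mem_image_of_mem u hy)
        rintro a ⟨x, hx, rfl⟩; exact hmax x (subset_closure hx)
      have h2 : sInf J ≤ u y := csInf_le hJbddB hyJ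
      linarith
  · -- (ii)
    intro hfge u hu hsup hdisj
    refine min_principle_aux hn hΩ' hu ?_
    intro y hy hmin
    have h0 : f y (u y) ≤ 0 := supersoln_interior_min hA hΩo hsup hy hmin
    have hf0 : f y (u y) = 0 := le_antisymm h0 (hfge y hy (u y))
    have hyJ : u y ∈ J := by rw [hJ]; exact ⟨y, hy, hf0⟩
    have hubd : ∀ a ∈ u '' frontier Ω, u y ≤ a := by
      rintro a ⟨x, hx, rfl⟩; exact hmin x (hfrK hx)
    rcases hdisj with h | h
    · have h1 : u y ≤ sInf (u '' frontier Ω) :=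
        le_csInf (hfrne.image u) hubd
      have h2 : sInf J ≤ u y := csInf_le hJbddB hyJ
      linarith
    · have h1 : sInf (u '' Ω) ≤ u y := by
        refine csInf_le ⟨u y, ?_⟩ (Set.mem_image_of_mem u hy)
        rintro a ⟨x, hx, rfl⟩; exact hmin x (subset_closure hx)
      have h2 : u y ≤ sSup J := le_csSup hJbddA hyJ
      linarith
  · -- (iii)
    intro hflt u hu hsub
    refine max_principle_aux hn hΩ' hu ?_
    intro y hy hmax
    exact absurd (subsoln_interior_max hA hΩo hsub hy hmax)
      (not_le.mpr (hflt y hy (u y)))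
  · -- (iv)
    intro hfgt u hu hsup
    refine min_principle_aux hn hΩ' hu ?_
    intro y hy hmin
    exact absurd (supersoln_interior_min hA hΩo hsup hy hmin)
      (not_le.mpr (hfgt y hy (u y)))


end
end

section
/- Change of variables. Let H satisfy Conditions A and B with k = k₁+k₂. Let f ∈ C(Ω×ℝ) and let ζ : ℝ → ℝ be C² with ζ′ > 0 everywhere; let η = ζ⁻¹ and, for u : Ω → ℝ, set v = ζ∘u. (a) If ζ is convex and u ∈ usc(Ω) solves H(Du,D²u)+f(x,u) ≥ 0 in Ω in the viscosity sense, then v solves H(Dv,D²v)+[η′(v(x))]^{−k} f(x, η(v(x))) ≥ 0 in Ω in the viscosity sense. (b) If ζ is concave and u ∈ lsc(Ω) solves H(Du,D²u)+f(x,u) ≤ 0 in Ω, then v solves H(Dv,D²v)+[η′(v(x))]^{−k} f(x, η(v(x))) ≤ 0 in Ω. -/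
open Real Set Filter Matrix MeasureTheory

noncomputable section

section AuxLemmas5

open Topology

private lemma aux_deriv_nonneg_of_monotone {g : ℝ → ℝ} {g' t : ℝ} (hm : Monotone g)
    (h : HasDerivAt g g' t) : 0 ≤ g' := by
  have h1 : Filter.Tendsto (slope g t) (𝓝[>] t) (𝓝 g') :=
    (hasDerivAt_iff_tendsto_slope.1 h).mono_left (nhdsWithin_mono _ (fun x hx => hx.ne'))
  refine ge_of_tendsto h1 (eventually_nhdsWithin_of_forall fun x hx => ?_)
  rw [slope_def_field]
  exact div_nonneg (sub_nonneg.2 (hm (le_of_lt hx))) (sub_nonneg.2 (le_of_lt hx))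

private lemma aux_eta_props {ζ η : ℝ → ℝ} (hζ : ContDiff ℝ 2 ζ) (hζ' : ∀ t, 0 < deriv ζ t)
    (hη : Function.LeftInverse η ζ) (t : ℝ) :
    ContDiffAt ℝ 2 η (ζ t) ∧ HasDerivAt η (deriv ζ t)⁻¹ (ζ t) := by
  have hne : deriv ζ t ≠ 0 := (hζ' t).ne'
  have hd : HasDerivAt ζ (deriv ζ t) t := (hζ.differentiable two_ne_zero t).hasDerivAt
  have hfd := hd.hasFDerivAt_equiv hne
  have hca := hζ.contDiffAt (x := t)
  have hgc : ContDiffAt ℝ 2 (hca.localInverse hfd two_ne_zero) (ζ t) :=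
    hca.to_localInverse hfd two_ne_zero
  have hrinv : ∀ᶠ w in 𝓝 (ζ t), ζ (hca.localInverse hfd two_ne_zero w) = w :=
    (hca.hasStrictFDerivAt' hfd two_ne_zero).eventually_right_inverse
  have heq : η =ᶠ[𝓝 (ζ t)] hca.localInverse hfd two_ne_zero := by
    filter_upwards [hrinv] with w hw
    calc η w = η (ζ (hca.localInverse hfd two_ne_zero w)) := by rw [hw]
    _ = _ := hη _
  refine ⟨hgc.congr_of_eventuallyEq heq, ?_⟩
  have hs : HasStrictDerivAt ζ (deriv ζ t) t := hζ.contDiffAt.hasStrictDerivAt two_ne_zero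
  exact (hs.to_local_left_inverse hne (Filter.Eventually.of_forall fun x => hη x)).hasDerivAt

private lemma aux_eta_deriv {ζ η : ℝ → ℝ} (hζ : ContDiff ℝ 2 ζ) (hζ' : ∀ t, 0 < deriv ζ t)
    (hη : Function.LeftInverse η ζ) (t : ℝ) : deriv η (ζ t) = (deriv ζ t)⁻¹ :=
  (aux_eta_props hζ hζ' hη t).2.deriv

private lemma aux_zeta_deriv2 {ζ : ℝ → ℝ} (hζ : ContDiff ℝ 2 ζ) (t : ℝ) :
    HasDerivAt (deriv ζ) (deriv (deriv ζ) t) t := by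
  have h2 : ContDiff ℝ (1+1) ζ := by norm_num; exact hζ
  exact (((contDiff_succ_iff_deriv (n := 1)).mp h2).2.2.differentiable one_ne_zero t).hasDerivAt

private lemma aux_eta_deriv2 {ζ η : ℝ → ℝ} (hζ : ContDiff ℝ 2 ζ) (hζ' : ∀ t, 0 < deriv ζ t)
    (hη : Function.LeftInverse η ζ) (t : ℝ) :
    HasDerivAt (deriv η)
      (-(deriv (deriv ζ) t * (deriv ζ t)⁻¹) / (deriv ζ t ^ 2)) (ζ t) := by
  have hopen : IsOpen (Set.range ζ) :=
    (isOpenMap_of_hasStrictDerivAt (fun s => hζ.contDiffAt.hasStrictDerivAt two_ne_zero)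
      (fun s => (hζ' s).ne')).isOpen_range
  have hev : ∀ᶠ w in 𝓝 (ζ t), (fun w => (deriv ζ (η w))⁻¹) w = deriv η w := by
    filter_upwards [hopen.mem_nhds (Set.mem_range_self t)] with w hw
    obtain ⟨t', rfl⟩ := hw
    rw [aux_eta_deriv hζ hζ' hη t', hη t']
  have h1 : HasDerivAt η (deriv ζ t)⁻¹ (ζ t) := (aux_eta_props hζ hζ' hη t).2
  have h3 : HasDerivAt (fun w => deriv ζ (η w))
      (deriv (deriv ζ) t * (deriv ζ t)⁻¹) (ζ t) := by
    have := HasDerivAt.comp (ζ t) (by rw [hη t]; exact aux_zeta_deriv2 hζ t :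
      HasDerivAt (deriv ζ) (deriv (deriv ζ) t) (η (ζ t))) h1
    exact this
  have h4 := h3.inv (x := ζ t) (by rw [hη t]; exact (hζ' t).ne')
  rw [hη t] at h4
  exact h4.congr_of_eventuallyEq (hev.mono fun w hw => hw.symm)

private lemma aux_comp_grad_hess {n : ℕ} {ψ₁ : EucSp n → ℝ} {y : EucSp n} {η : ℝ → ℝ} {b : ℝ}
    (hψ : ContDiffAt ℝ 2 ψ₁ y) (hη2 : ContDiffAt ℝ 2 η (ψ₁ y))
    (hb : HasDerivAt (deriv η) b (ψ₁ y)) :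
    ContDiffAt ℝ 2 (fun x => η (ψ₁ x)) y ∧
    gradient (fun x => η (ψ₁ x)) y = deriv η (ψ₁ y) • gradient ψ₁ y ∧
    hessianAt (fun x => η (ψ₁ x)) y =
      deriv η (ψ₁ y) • hessianAt ψ₁ y + b • outer (gradient ψ₁ y) := by
  have hF' : DifferentiableAt ℝ (fderiv ℝ ψ₁) y :=
    (hψ.fderiv_right (m := 1) (by norm_num)).differentiableAt one_ne_zero
  have hev : ∀ᶠ x in 𝓝 y, HasFDerivAt ψ₁ (fderiv ℝ ψ₁ x) x := by
    filter_upwards [hψ.eventually (by norm_num)] with x hx using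
      (hx.differentiableAt two_ne_zero).hasFDerivAt
  have hηev : ∀ᶠ x in 𝓝 y, DifferentiableAt ℝ η (ψ₁ x) :=
    ((hψ.continuousAt).eventually (hη2.eventually (by norm_num))).mono
      fun x hx => hx.differentiableAt two_ne_zero
  have hφev : ∀ᶠ x in 𝓝 y, HasFDerivAt (fun z => η (ψ₁ z))
      (deriv η (ψ₁ x) • fderiv ℝ ψ₁ x) x := by
    filter_upwards [hev, hηev] with x h1 h2 using h2.hasDerivAt.comp_hasFDerivAt x h1
  have hc : HasFDerivAt (fun x => deriv η (ψ₁ x)) (b • fderiv ℝ ψ₁ y) y :=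
    hb.comp_hasFDerivAt y hev.self_of_nhds
  have hG : HasFDerivAt (fun x => deriv η (ψ₁ x) • fderiv ℝ ψ₁ x)
      (deriv η (ψ₁ y) • fderiv ℝ (fderiv ℝ ψ₁) y +
        (b • fderiv ℝ ψ₁ y).smulRight (fderiv ℝ ψ₁ y)) y :=
    hc.smul hF'.hasFDerivAt
  have hfd2 : fderiv ℝ (fderiv ℝ (fun z => η (ψ₁ z))) y =
      deriv η (ψ₁ y) • fderiv ℝ (fderiv ℝ ψ₁) y +
        (b • fderiv ℝ ψ₁ y).smulRight (fderiv ℝ ψ₁ y) := by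
    have heq : fderiv ℝ (fun z => η (ψ₁ z)) =ᶠ[𝓝 y]
        fun x => deriv η (ψ₁ x) • fderiv ℝ ψ₁ x := hφev.mono fun x hx => hx.fderiv
    rw [heq.fderiv_eq]
    exact hG.fderiv
  have hFg : ∀ v, (inner ℝ (gradient ψ₁ y) v : ℝ) = fderiv ℝ ψ₁ y v := fun v =>
    InnerProductSpace.toDual_symm_apply
  have hsingle : ∀ i : Fin n, fderiv ℝ ψ₁ y (EuclideanSpace.single i 1) = gradient ψ₁ y i := by
    intro i
    rw [← hFg, EuclideanSpace.inner_single_right]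
    simp
  refine ⟨hη2.comp y hψ, ?_, ?_⟩
  · show (InnerProductSpace.toDual ℝ _).symm (fderiv ℝ (fun x => η (ψ₁ x)) y) = _
    rw [hφev.self_of_nhds.fderiv]
    simp [gradient]
  · ext i j
    simp only [hessianAt, iteratedFDeriv_two_apply, Matrix.cons_val_zero, Matrix.cons_val_one,
      Matrix.head_cons, hfd2, Matrix.add_apply, Matrix.smul_apply, outer, smul_eq_mul,
      ContinuousLinearMap.add_apply, ContinuousLinearMap.coe_smul', Pi.smul_apply,
      ContinuousLinearMap.smulRight_apply, hsingle]
    ring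

private lemma aux_hessian_isSymm {n : ℕ} {ψ : EucSp n → ℝ} {y : EucSp n}
    (hψ : ContDiffAt ℝ 2 ψ y) : (hessianAt ψ y).IsSymm := by
  have hev : ∀ᶠ x in 𝓝 y, HasFDerivAt ψ (fderiv ℝ ψ x) x := by
    filter_upwards [hψ.eventually (by norm_num)] with x hx using
      (hx.differentiableAt two_ne_zero).hasFDerivAt
  have hF' : HasFDerivAt (fderiv ℝ ψ) (fderiv ℝ (fderiv ℝ ψ) y) y :=
    ((hψ.fderiv_right (m := 1) (by norm_num)).differentiableAt one_ne_zero).hasFDerivAt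
  apply Matrix.IsSymm.ext; intro i j
  simp only [hessianAt, iteratedFDeriv_two_apply, Matrix.cons_val_zero, Matrix.cons_val_one,
    Matrix.head_cons]
  exact second_derivative_symmetric_of_eventually hev hF' _ _

private lemma aux_outer_psd {n : ℕ} (c : ℝ) (hc : 0 ≤ c) (g : EucSp n) :
    (c • outer g : Mat n).PosSemidef := by
  rw [Matrix.posSemidef_iff_dotProduct_mulVec]
  constructor
  · ext i j
    simp only [Matrix.conjTranspose_apply, Matrix.smul_apply, outer, smul_eq_mul, star_trivial]
    ring
  · intro x
    have h1 : ∀ i, ((c • outer g : Mat n) *ᵥ x) i = c * g i * (∑ j, g j * x j) := by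
      intro i
      simp only [Matrix.mulVec, dotProduct, Matrix.smul_apply, outer, smul_eq_mul,
        Finset.mul_sum]
      exact Finset.sum_congr rfl fun j _ => by ring
    have h2 : star x ⬝ᵥ ((c • outer g : Mat n) *ᵥ x)
        = c * ((∑ j, g j * x j) * (∑ j, g j * x j)) := by
      simp only [dotProduct, Pi.star_apply, star_trivial, h1]
      rw [Finset.sum_congr rfl (fun i _ => by ring :
        ∀ i ∈ Finset.univ, x i * (c * g i * ∑ j, g j * x j)
          = c * (∑ j, g j * x j) * (g i * x i))]
      rw [← Finset.mul_sum]
      ring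
    rw [h2]
    exact mul_nonneg hc (mul_self_nonneg _)

private lemma aux_grad_sub_const {n : ℕ} (ψ : EucSp n → ℝ) (c : ℝ) (y : EucSp n) :
    gradient (fun x => ψ x - c) y = gradient ψ y := by
  simp [gradient, fderiv_sub_const]

private lemma aux_hess_sub_const {n : ℕ} (ψ : EucSp n → ℝ) (c : ℝ) (y : EucSp n) :
    hessianAt (fun x => ψ x - c) y = hessianAt ψ y := by
  have h : fderiv ℝ (fun x => ψ x - c) = fderiv ℝ ψ := funext fun x => fderiv_sub_const c
  ext i j
  simp only [hessianAt, iteratedFDeriv_two_apply, h]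

end AuxLemmas5

/-- Change of variables (Lemma 5.5). -/
theorem stmt_5 {n : ℕ} (hn : 2 ≤ n) (Ω : Set (EucSp n)) (hΩ : IsBoundedDomain Ω)
    (H : EucSp n → Mat n → ℝ) (hH : Continuous fun q : EucSp n × Mat n => H q.1 q.2)
    (k₁ k₂ : ℝ) (hA : CondA H) (hB : CondB H k₁ k₂)
    (f : EucSp n → ℝ → ℝ)
    (hf : ContinuousOn (fun q : EucSp n × ℝ => f q.1 q.2) (Ω ×ˢ (univ : Set ℝ)))
    (ζ η : ℝ → ℝ) (hζ : ContDiff ℝ 2 ζ) (hζ' : ∀ t, 0 < deriv ζ t)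
    (hη : Function.LeftInverse η ζ)
    (u : EucSp n → ℝ) :
    (ConvexOn ℝ univ ζ → UpperSemicontinuousOn u Ω → ViscSubSoln H f Ω u →
      ViscSubSoln H (fun x s => deriv η s ^ (-(k₁ + k₂)) * f x (η s)) Ω
        (fun x => ζ (u x))) ∧
    (ConcaveOn ℝ univ ζ → LowerSemicontinuousOn u Ω → ViscSuperSoln H f Ω u →
      ViscSuperSoln H (fun x s => deriv η s ^ (-(k₁ + k₂)) * f x (η s)) Ω
        (fun x => ζ (u x))) := by
  have hζd : Differentiable ℝ ζ := hζ.differentiable two_ne_zero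
  have hmono : StrictMono ζ := strictMono_of_deriv_pos hζ'
  have hopen : IsOpen (Set.range ζ) :=
    (isOpenMap_of_hasStrictDerivAt (fun s => hζ.contDiffAt.hasStrictDerivAt two_ne_zero)
      (fun s => (hζ' s).ne')).isOpen_range
  constructor
  · -- (a) subsolution case
    intro hconv _ hu ψ y hy hψ hmax
    obtain ⟨c, hc⟩ : ∃ c, c = ψ y - ζ (u y) := ⟨_, rfl⟩
    have e : ψ y - c = ζ (u y) := by rw [hc]; ring
    have ha_pos : (0:ℝ) < (deriv ζ (u y))⁻¹ := inv_pos.2 (hζ' (u y))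
    obtain ⟨hφcd, hφgrad, hφhess⟩ :=
      aux_comp_grad_hess (ψ₁ := fun x => ψ x - c) (η := η) (y := y)
        (hψ.sub contDiffAt_const)
        (by show ContDiffAt ℝ 2 η (ψ y - c); rw [e]; exact (aux_eta_props hζ hζ' hη (u y)).1)
        (by show HasDerivAt (deriv η) (-(deriv (deriv ζ) (u y) * (deriv ζ (u y))⁻¹) / (deriv ζ (u y) ^ 2)) (ψ y - c); rw [e]; exact aux_eta_deriv2 hζ hζ' hη (u y))
    have ha : deriv η (ψ y - c) = (deriv ζ (u y))⁻¹ := by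
      rw [e]; exact aux_eta_deriv hζ hζ' hη (u y)
    -- local max transfer
    have hrange_ev : ∀ᶠ x in nhds y, ψ x - c ∈ Set.range ζ := by
      have hcont : ContinuousAt (fun x => ψ x - c) y := (hψ.sub contDiffAt_const).continuousAt
      have := hcont.eventually_mem (hopen.mem_nhds (by rw [e]; exact Set.mem_range_self (u y)))
      exact this
    have hlm : IsLocalMax (fun x => u x - η (ψ x - c)) y := by
      filter_upwards [hmax, hrange_ev] with x hx1 hx2
      obtain ⟨w, hw⟩ := hx2
      have hle : ζ (u x) ≤ ζ w := by
        rw [hw]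
        linarith [hx1, hc.le, hc.ge]
      have huw : u x ≤ w := hmono.le_iff_le.mp hle
      have hφx : η (ψ x - c) = w := by rw [← hw, hη w]
      have hφy : η (ψ y - c) = u y := by rw [e, hη (u y)]
      simp only [hφx, hφy]
      linarith
    have h0 := hu (fun x => η (ψ x - c)) y hy hφcd hlm
    rw [hφgrad, hφhess, aux_grad_sub_const, aux_hess_sub_const, ha] at h0
    -- sign of second-order coefficient
    have hz2 : 0 ≤ deriv (deriv ζ) (u y) := by
      have hm : Monotone (deriv ζ) := monotoneOn_univ.mp
        (hconv.monotoneOn_deriv fun x _ => hζd.differentiableAt)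
      exact aux_deriv_nonneg_of_monotone hm (aux_zeta_deriv2 hζ (u y))
    set a := (deriv ζ (u y))⁻¹ with ha_def
    set B := -(deriv (deriv ζ) (u y) * (deriv ζ (u y))⁻¹) / (deriv ζ (u y) ^ 2) with hB_def
    have hB0 : B ≤ 0 := by
      rw [hB_def, div_nonpos_iff]
      exact Or.inr ⟨neg_nonpos.mpr (mul_nonneg hz2 ha_pos.le), sq_nonneg _⟩
    set gm := gradient ψ y
    set Hm := hessianAt ψ y
    have hHsym : Matrix.IsSymm Hm := aux_hessian_isSymm hψ
    have hXsym : (a • Hm + B • outer gm).IsSymm := by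
      apply Matrix.IsSymm.ext; intro i j
      simp only [Matrix.add_apply, Matrix.smul_apply, outer, smul_eq_mul]
      rw [hHsym.apply i j]; ring
    have hYsym : (a • Hm).IsSymm := by
      apply Matrix.IsSymm.ext; intro i j
      simp only [Matrix.smul_apply, smul_eq_mul]
      rw [hHsym.apply i j]
    have hsub : a • Hm - (a • Hm + B • outer gm) = (-B) • outer gm := by
      ext i j
      simp only [Matrix.sub_apply, Matrix.add_apply, Matrix.smul_apply, outer, smul_eq_mul]
      ring
    have hpsd : (a • Hm - (a • Hm + B • outer gm)).PosSemidef := by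
      rw [hsub]; exact aux_outer_psd _ (neg_nonneg.2 hB0) gm
    have hle := hA.2 (a • gm) _ _ hXsym hYsym hpsd
    have e1 : H (a • gm) (a • Hm) = a ^ k₂ * H (a • gm) Hm := hB.2.2.2 a ha_pos (a • gm) Hm
    have e2 : H (a • gm) Hm = |a| ^ k₁ * H gm Hm := hB.2.2.1 a gm Hm
    have hP : (0:ℝ) < a ^ (k₁ + k₂) := Real.rpow_pos_of_pos ha_pos _
    have hkey : 0 ≤ a ^ (k₁ + k₂) * H gm Hm + f y (u y) := by
      have h5 : H (a • gm) (a • Hm) = a ^ (k₁ + k₂) * H gm Hm := by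
        rw [e1, e2, abs_of_pos ha_pos, ← mul_assoc, ← Real.rpow_add ha_pos, add_comm k₂ k₁]
      calc (0:ℝ) ≤ H (a • gm) (a • Hm + B • outer gm) + f y (u y) := h0
      _ ≤ H (a • gm) (a • Hm) + f y (u y) := by linarith [hle]
      _ = a ^ (k₁ + k₂) * H gm Hm + f y (u y) := by rw [h5]
    show 0 ≤ H (gradient ψ y) (hessianAt ψ y) +
      deriv η (ζ (u y)) ^ (-(k₁ + k₂)) * f y (η (ζ (u y)))
    rw [aux_eta_deriv hζ hζ' hη (u y), hη (u y), Real.rpow_neg ha_pos.le]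
    have h6 := mul_nonneg (inv_nonneg.2 hP.le) hkey
    rw [mul_add, ← mul_assoc, inv_mul_cancel₀ hP.ne', one_mul] at h6
    exact h6
  · -- (b) supersolution case
    intro hconc _ hu ψ y hy hψ hmax
    obtain ⟨c, hc⟩ : ∃ c, c = ψ y - ζ (u y) := ⟨_, rfl⟩
    have e : ψ y - c = ζ (u y) := by rw [hc]; ring
    have ha_pos : (0:ℝ) < (deriv ζ (u y))⁻¹ := inv_pos.2 (hζ' (u y))
    obtain ⟨hφcd, hφgrad, hφhess⟩ :=
      aux_comp_grad_hess (ψ₁ := fun x => ψ x - c) (η := η) (y := y)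
        (hψ.sub contDiffAt_const)
        (by show ContDiffAt ℝ 2 η (ψ y - c); rw [e]; exact (aux_eta_props hζ hζ' hη (u y)).1)
        (by show HasDerivAt (deriv η) (-(deriv (deriv ζ) (u y) * (deriv ζ (u y))⁻¹) / (deriv ζ (u y) ^ 2)) (ψ y - c); rw [e]; exact aux_eta_deriv2 hζ hζ' hη (u y))
    have ha : deriv η (ψ y - c) = (deriv ζ (u y))⁻¹ := by
      rw [e]; exact aux_eta_deriv hζ hζ' hη (u y)
    have hrange_ev : ∀ᶠ x in nhds y, ψ x - c ∈ Set.range ζ := by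
      have hcont : ContinuousAt (fun x => ψ x - c) y := (hψ.sub contDiffAt_const).continuousAt
      exact hcont.eventually_mem (hopen.mem_nhds (by rw [e]; exact Set.mem_range_self (u y)))
    have hlm : IsLocalMin (fun x => u x - η (ψ x - c)) y := by
      filter_upwards [hmax, hrange_ev] with x hx1 hx2
      obtain ⟨w, hw⟩ := hx2
      have hle : ζ w ≤ ζ (u x) := by
        rw [hw]
        linarith [hx1, hc.le, hc.ge]
      have huw : w ≤ u x := hmono.le_iff_le.mp hle
      have hφx : η (ψ x - c) = w := by rw [← hw, hη w]
      have hφy : η (ψ y - c) = u y := by rw [e, hη (u y)]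
      simp only [hφx, hφy]
      linarith
    have h0 := hu (fun x => η (ψ x - c)) y hy hφcd hlm
    rw [hφgrad, hφhess, aux_grad_sub_const, aux_hess_sub_const, ha] at h0
    have hz2 : deriv (deriv ζ) (u y) ≤ 0 := by
      have hanti : Antitone (deriv ζ) := antitoneOn_univ.mp
        (hconc.antitoneOn_deriv fun x _ => hζd.differentiableAt)
      have hm : Monotone (fun s => -(deriv ζ s)) := fun s t hst => neg_le_neg (hanti hst)
      have := aux_deriv_nonneg_of_monotone hm ((aux_zeta_deriv2 hζ (u y)).neg)
      linarith
    set a := (deriv ζ (u y))⁻¹ with ha_def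
    set B := -(deriv (deriv ζ) (u y) * (deriv ζ (u y))⁻¹) / (deriv ζ (u y) ^ 2) with hB_def
    have hB0 : 0 ≤ B := by
      rw [hB_def]
      exact div_nonneg (neg_nonneg.2 (mul_nonpos_of_nonpos_of_nonneg hz2 ha_pos.le)) (sq_nonneg _)
    set gm := gradient ψ y
    set Hm := hessianAt ψ y
    have hHsym : Matrix.IsSymm Hm := aux_hessian_isSymm hψ
    have hXsym : (a • Hm + B • outer gm).IsSymm := by
      apply Matrix.IsSymm.ext; intro i j
      simp only [Matrix.add_apply, Matrix.smul_apply, outer, smul_eq_mul]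
      rw [hHsym.apply i j]; ring
    have hYsym : (a • Hm).IsSymm := by
      apply Matrix.IsSymm.ext; intro i j
      simp only [Matrix.smul_apply, smul_eq_mul]
      rw [hHsym.apply i j]
    have hsub : (a • Hm + B • outer gm) - a • Hm = B • outer gm := by
      ext i j
      simp only [Matrix.sub_apply, Matrix.add_apply, Matrix.smul_apply, outer, smul_eq_mul]
      ring
    have hpsd : ((a • Hm + B • outer gm) - a • Hm).PosSemidef := by
      rw [hsub]; exact aux_outer_psd _ hB0 gm
    have hle := hA.2 (a • gm) _ _ hYsym hXsym hpsd
    have e1 : H (a • gm) (a • Hm) = a ^ k₂ * H (a • gm) Hm := hB.2.2.2 a ha_pos (a • gm) Hm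
    have e2 : H (a • gm) Hm = |a| ^ k₁ * H gm Hm := hB.2.2.1 a gm Hm
    have hP : (0:ℝ) < a ^ (k₁ + k₂) := Real.rpow_pos_of_pos ha_pos _
    have hkey : a ^ (k₁ + k₂) * H gm Hm + f y (u y) ≤ 0 := by
      have h5 : H (a • gm) (a • Hm) = a ^ (k₁ + k₂) * H gm Hm := by
        rw [e1, e2, abs_of_pos ha_pos, ← mul_assoc, ← Real.rpow_add ha_pos, add_comm k₂ k₁]
      calc a ^ (k₁ + k₂) * H gm Hm + f y (u y)
          = H (a • gm) (a • Hm) + f y (u y) := by rw [h5]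
      _ ≤ H (a • gm) (a • Hm + B • outer gm) + f y (u y) := by linarith [hle]
      _ ≤ 0 := h0
    show H (gradient ψ y) (hessianAt ψ y) +
      deriv η (ζ (u y)) ^ (-(k₁ + k₂)) * f y (η (ζ (u y))) ≤ 0
    rw [aux_eta_deriv hζ hζ' hη (u y), hη (u y), Real.rpow_neg ha_pos.le]
    have h6 := mul_nonpos_of_nonneg_of_nonpos (inv_nonneg.2 hP.le) hkey
    rw [mul_add, ← mul_assoc, inv_mul_cancel₀ hP.ne', one_mul] at h6
    exact h6

end
end

section
/- Finiteness of λ_Ω. Let H satisfy Conditions A, B and C, let δ > 0, and let a ∈ C(Ω)∩L^∞(Ω) with inf_Ω a > 0. (a) If condition (i*) holds, then λ_Ω < ∞. (b) If condition (ii*) holds, Ω satisfies a uniform outer ball condition, and H additionally satisfies Condition D, then λ_Ω < ∞. -/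
open Real Set Filter Matrix MeasureTheory

noncomputable section

/-! ### Auxiliary machinery for the proof -/

section AuxProof

variable {n : ℕ}

noncomputable def innerT (n : ℕ) : EucSp n →L[ℝ] (EucSp n →L[ℝ] ℝ) :=
  LinearMap.toContinuousLinearMap
    { toFun := fun v => innerSL ℝ v
      map_add' := by intro u v; ext w; simp [inner_add_left]
      map_smul' := by intro c v; ext w; simp [real_inner_smul_left] }

@[simp] lemma innerT_apply (v w : EucSp n) : innerT n v w = (inner ℝ v w : ℝ) := by
  simp [innerT]

def psiF (t R : ℝ) (z : EucSp n) : EucSp n → ℝ := fun x => t * (R^2 - ‖x - z‖^2)^2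
def ccF (t R : ℝ) (z : EucSp n) : EucSp n → ℝ := fun x => -(4*t) * (R^2 - ‖x - z‖^2)
def PsiF (t R : ℝ) (z : EucSp n) : EucSp n → (EucSp n →L[ℝ] ℝ) :=
  fun x => ccF t R z x • innerSL ℝ (x - z)

lemma hasFDerivAt_q (z x : EucSp n) :
    HasFDerivAt (fun x : EucSp n => ‖x - z‖^2) ((2:ℝ) • innerSL ℝ (x - z)) x := by
  have h := ((hasFDerivAt_id x).sub_const z).norm_sq
  refine h.congr_fderiv ?_
  ext w
  simp [two_smul]

lemma hasFDerivAt_psiF (t R : ℝ) (z x : EucSp n) :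
    HasFDerivAt (psiF t R z) (PsiF t R z x) x := by
  have hq := hasFDerivAt_q z x
  have hg : HasDerivAt (fun s : ℝ => t * (R^2 - s)^2)
      (t * (2 * (R^2 - ‖x - z‖^2)^1 * (0 - 1))) (‖x - z‖^2) :=
    (((hasDerivAt_const _ (R^2)).sub (hasDerivAt_id _)).pow 2).const_mul t
  have h := hg.comp_hasFDerivAt x hq
  refine h.congr_fderiv ?_
  ext w
  simp [PsiF, ccF]
  ring

lemma hasFDerivAt_PsiF (t R : ℝ) (z y : EucSp n) :
    HasFDerivAt (PsiF t R z)
      (ccF t R z y • innerT n + ((8*t) • innerSL ℝ (y - z)).smulRight (innerSL ℝ (y - z))) y := by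
  have hcc : HasFDerivAt (ccF t R z) ((8*t) • innerSL ℝ (y - z)) y := by
    have hq := hasFDerivAt_q z y
    have hg : HasDerivAt (fun s : ℝ => -(4*t) * (R^2 - s)) (-(4*t) * (0 - 1)) (‖y - z‖^2) :=
      ((hasDerivAt_const _ (R^2)).sub (hasDerivAt_id _)).const_mul (-(4*t))
    have h := hg.comp_hasFDerivAt y hq
    refine h.congr_fderiv ?_
    ext w
    simp [ccF]
    ring
  have hf : HasFDerivAt (fun x : EucSp n => innerSL ℝ (x - z)) (innerT n) y := by
    have h := (innerT n).hasFDerivAt.comp y ((hasFDerivAt_id y).sub_const z)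
    convert h using 1
    all_goals first
      | (funext x; ext w; simp)
      | (ext v w; simp)
  exact hcc.smul hf

lemma fderiv_psiF (t R : ℝ) (z : EucSp n) : fderiv ℝ (psiF t R z) = PsiF t R z :=
  funext fun x => (hasFDerivAt_psiF t R z x).fderiv

lemma gradient_psiF (t R : ℝ) (z y : EucSp n) :
    gradient (psiF t R z) y = ccF t R z y • (y - z) := by
  have hg : HasGradientAt (psiF t R z) (ccF t R z y • (y - z)) y := by
    rw [hasGradientAt_iff_hasFDerivAt]
    refine (hasFDerivAt_psiF t R z y).congr_fderiv ?_
    ext w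
    simp [PsiF, real_inner_smul_left]
  exact hg.gradient

lemma hessianAt_psiF (t R : ℝ) (z y : EucSp n) :
    hessianAt (psiF t R z) y = (8*t) • outer (y - z) + ccF t R z y • (1 : Mat n) := by
  funext i j
  have h2 : hessianAt (psiF t R z) y i j
      = fderiv ℝ (fderiv ℝ (psiF t R z)) y (EuclideanSpace.single i 1)
          (EuclideanSpace.single j 1) := by
    rw [hessianAt, iteratedFDeriv_two_apply]
    rfl
  rw [h2, fderiv_psiF, (hasFDerivAt_PsiF t R z y).fderiv]
  simp [EuclideanSpace.inner_single_right, EuclideanSpace.inner_single_left,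
    EuclideanSpace.single_apply, Matrix.one_apply, outer, Matrix.add_apply, Matrix.smul_apply,
    real_inner_smul_left]
  rcases eq_or_ne i j with h | h
  · subst h; simp; ring
  · simp [h, Ne.symm h]; ring

lemma contDiff_psiF (t R : ℝ) (z : EucSp n) : ContDiff ℝ 2 (psiF t R z) := by
  unfold psiF
  exact contDiff_const.mul
    ((contDiff_const.sub ((contDiff_id.sub contDiff_const).norm_sq (𝕜 := ℝ))).pow 2)

set_option maxHeartbeats 2000000 in
lemma eigenSet_bddAbove {n : ℕ} (Ω : Set (EucSp n)) (hΩ : IsBoundedDomain Ω)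
    (H : EucSp n → Mat n → ℝ) (hH : Continuous fun q : EucSp n × Mat n => H q.1 q.2)
    (k₁ k₂ : ℝ) (hB : CondB H k₁ k₂) (hC : CondC H k₁ k₂)
    (δ : ℝ) (a : EucSp n → ℝ) (hainf : 0 < sInf (a '' Ω)) :
    BddAbove (eigenSet H Ω a (k₁ + k₂) δ) := by
  obtain ⟨hB1, hB2, hBp, hBX⟩ := hB
  have hk : 0 < k₁ + k₂ := by linarith
  obtain ⟨hopen, hconn, -⟩ := hΩ
  obtain ⟨z, hz⟩ := hconn.nonempty
  obtain ⟨ε, hε, hball⟩ := Metric.isOpen_iff.1 hopen z hz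
  set R := ε/2 with hR_def
  have hR : 0 < R := by rw [hR_def]; positivity
  have hKΩ : Metric.closedBall z R ⊆ Ω :=
    (Metric.closedBall_subset_ball (by rw [hR_def]; linarith)).trans hball
  clear_value R
  -- Condition C gives a uniform positive lower bound for H e (s • outer e - 1), s ≥ s₀
  obtain ⟨-, s₁, s₀, ℓ, -, h1s₀, hℓ, -, hm2⟩ := hC
  have hs₀ : (0:ℝ) < s₀ := lt_of_lt_of_le one_pos h1s₀
  have hHge : ∀ s, s₀ ≤ s → ∀ e : EucSp n, ‖e‖ = 1 → ℓ ≤ H e (s • outer e - 1) := by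
    intro s hs e he
    have h := hm2 s hs
    unfold m2 at h
    have h2 := (max_lt_iff.1 h).2
    set S := {r | ∃ e : EucSp n, ‖e‖ = 1 ∧ r = H e (s • outer e - 1)} with hS_def
    have hℓS : ℓ < sInf S := by linarith
    have hb : BddBelow S := by
      by_contra hcon
      rw [Real.sInf_of_not_bddBelow hcon] at hℓS
      linarith
    have hmem : H e (s • outer e - 1) ∈ S := ⟨e, he, rfl⟩
    have := csInf_le hb hmem
    linarith
  -- the radius r₀ where the hessian becomes coercive
  set r₀ := R * Real.sqrt (s₀ / (2 + s₀)) with hr₀_def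
  have hr₀pos : 0 < r₀ := by
    rw [hr₀_def]; exact mul_pos hR (Real.sqrt_pos.2 (by positivity))
  have hr₀sq : r₀^2 = R^2 * (s₀ / (2 + s₀)) := by
    rw [hr₀_def, mul_pow, Real.sq_sqrt (by positivity)]
  have hr₀R : r₀ < R := by
    have hc : s₀/(2+s₀) < 1 := (div_lt_one (by linarith)).2 (by linarith)
    have h1 : r₀^2 < R^2 := by nlinarith [mul_pos hR hR]
    nlinarith [hr₀pos]
  clear_value r₀
  -- compact bound for the t = 1 operator value
  set cc := ccF 1 R z with hcc_def
  set G : EucSp n → ℝ :=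
    fun x => H (cc x • (x - z)) ((8*1:ℝ) • outer (x - z) + cc x • (1 : Mat n)) with hG_def
  have hccC : Continuous cc := by
    rw [hcc_def]; unfold ccF
    exact continuous_const.mul
      (continuous_const.sub ((continuous_id.sub continuous_const).norm.pow 2))
  have hcoord : ∀ i : Fin n, Continuous fun x : EucSp n => (x - z) i := by
    intro i
    fun_prop
  have houterC : Continuous fun x : EucSp n => outer (x - z) := by
    unfold outer
    exact continuous_pi fun i => continuous_pi fun j => (hcoord i).mul (hcoord j)
  have hhessC : Continuous fun x : EucSp n => ((8*1:ℝ) • outer (x - z) + cc x • (1 : Mat n)) := by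
    fun_prop
  have hgradC : Continuous fun x : EucSp n => cc x • (x - z) :=
    hccC.smul (continuous_id.sub continuous_const)
  have hGC : Continuous G := by
    rw [hG_def]
    exact hH.comp (hgradC.prodMk hhessC)
  clear_value G cc
  obtain ⟨x₀, hx₀, hx₀min⟩ := (isCompact_closedBall z r₀).exists_isMinOn
    ⟨z, Metric.mem_closedBall_self hr₀pos.le⟩ hGC.continuousOn
  set M := max 0 (-(G x₀)) with hM_def
  have hM0 : 0 ≤ M := by rw [hM_def]; exact le_max_left _ _
  have hMbd : ∀ x ∈ Metric.closedBall z r₀, -M ≤ G x := by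
    intro x hx
    have h1 := isMinOn_iff.1 hx₀min x hx
    have h2 : -(G x₀) ≤ M := by rw [hM_def]; exact le_max_right _ _
    linarith
  clear_value M
  set c₀ := (R^2 - r₀^2)^2 with hc₀_def
  have hc₀ : 0 < c₀ := by rw [hc₀_def]; exact pow_pos (by nlinarith) 2
  set C := M / c₀ ^ (k₁ + k₂) with hC_def
  have hC0 : 0 ≤ C := by
    rw [hC_def]; exact div_nonneg hM0 (Real.rpow_pos_of_pos hc₀ _).le
  set φ : EucSp n → ℝ := fun x => (R^2 - ‖x - z‖^2)^2 with hφ_def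
  have hφ0 : ∀ x, 0 ≤ φ x := by
    intro x; simp only [hφ_def]; exact sq_nonneg _
  clear_value φ
  -- the key pointwise estimate
  have hkey : ∀ y : EucSp n, ‖y - z‖ < R → -(C * (φ y) ^ (k₁ + k₂)) ≤ G y := by
    intro y hy
    have hr0 : 0 ≤ ‖y - z‖ := norm_nonneg _
    have hrR2 : ‖y - z‖^2 < R^2 := by nlinarith
    have hφval : φ y = (R^2 - ‖y - z‖^2)^2 := by simp only [hφ_def]
    have hφpos : 0 < φ y := by rw [hφval]; exact pow_pos (by nlinarith) 2
    rcases le_or_gt ‖y - z‖ r₀ with hcase | hcase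
    · have h1 : -M ≤ G y := hMbd y (by rw [Metric.mem_closedBall, dist_eq_norm]; exact hcase)
      have h2 : c₀ ≤ φ y := by
        rw [hφval, hc₀_def]
        clear_value C
        have ha1 : R^2 - r₀^2 ≤ R^2 - ‖y - z‖^2 := by nlinarith
        have ha2 : (0:ℝ) ≤ R^2 - r₀^2 := by nlinarith
        nlinarith
      have h3 : C * c₀ ^ (k₁+k₂) ≤ C * (φ y) ^ (k₁+k₂) :=
        mul_le_mul_of_nonneg_left (Real.rpow_le_rpow hc₀.le h2 hk.le) hC0
      have h4 : C * c₀ ^ (k₁+k₂) = M := by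
        rw [hC_def]
        exact div_mul_cancel₀ M (Real.rpow_pos_of_pos hc₀ _).ne'
      linarith
    · -- coercive region
      set r := ‖y - z‖ with hr_def
      have hrpos : 0 < r := lt_trans hr₀pos hcase
      have hRr : (0:ℝ) < R^2 - r^2 := by nlinarith
      set e : EucSp n := r⁻¹ • (y - z) with he_def
      have he : ‖e‖ = 1 := by
        rw [he_def, norm_smul, Real.norm_eq_abs, abs_of_pos (inv_pos.2 hrpos), ← hr_def]
        field_simp
      have hwe : y - z = r • e := by
        rw [he_def, smul_smul, mul_inv_cancel₀ hrpos.ne', one_smul]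
      set s := 2*r^2 / (R^2 - r^2) with hs_def
      have hss₀ : s₀ ≤ s := by
        rw [hs_def, le_div_iff₀ hRr]
        have h5 : r₀^2 ≤ r^2 := by nlinarith
        rw [hr₀sq] at h5
        have hpos : (0:ℝ) < 2 + s₀ := by linarith
        have h6 : R^2 * s₀ ≤ r^2 * (2 + s₀) := by
          have h7 := mul_le_mul_of_nonneg_right h5 hpos.le
          calc R^2 * s₀ = R^2 * (s₀ / (2+s₀)) * (2+s₀) := by field_simp
            _ ≤ r^2 * (2+s₀) := h7
        nlinarith
      have houter : outer (y - z) = (r^2) • outer e := by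
        funext i j
        rw [hwe]
        show (r • e) i * (r • e) j = r^2 * (e i * e j)
        simp [PiLp.smul_apply, smul_eq_mul]
        ring
      have hccy : cc y = -(4*(R^2-r^2)) := by
        rw [hcc_def]
        show -(4*1) * (R^2 - ‖y - z‖^2) = -(4*(R^2-r^2))
        rw [← hr_def]; ring
      have hhess : ((8*1:ℝ) • outer (y - z) + cc y • (1 : Mat n))
          = (4*(R^2 - r^2)) • (s • outer e - 1) := by
        rw [smul_sub, smul_smul, houter, smul_smul, hccy]
        have h7 : 4*(R^2-r^2) * s = (8*1:ℝ)*r^2 := by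
          rw [hs_def]; field_simp; ring
        rw [h7, sub_eq_add_neg, neg_smul]
        exact (sub_eq_add_neg _ _).symm
      have hgrad : cc y • (y - z) = (cc y * r) • e := by
        rw [hwe, smul_smul]
      have hGval : G y = |cc y * r| ^ k₁ * ((4*(R^2-r^2)) ^ k₂ * H e (s • outer e - 1)) := by
        have : G y = H (cc y • (y - z)) ((8*1:ℝ) • outer (y - z) + cc y • (1 : Mat n)) := by
          simp only [hG_def]
        rw [this, hgrad, hhess, hBp, hBX _ (by nlinarith)]
      have hHe : ℓ ≤ H e (s • outer e - 1) := hHge s hss₀ e he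
      have hGpos : 0 ≤ G y := by
        rw [hGval]
        have ha1 : (0:ℝ) ≤ |cc y * r| ^ k₁ := Real.rpow_nonneg (abs_nonneg _) _
        have ha2 : (0:ℝ) < (4*(R^2-r^2)) ^ k₂ := Real.rpow_pos_of_pos (by nlinarith) _
        have ha3 : (0:ℝ) ≤ H e (s • outer e - 1) := le_trans hℓ.le hHe
        positivity
      have ha4 : (0:ℝ) ≤ C * (φ y) ^ (k₁+k₂) :=
        mul_nonneg hC0 (Real.rpow_nonneg hφpos.le _)
      linarith
  -- now bound the eigen set
  refine ⟨C / sInf (a '' Ω), fun lam hlam => ?_⟩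
  obtain ⟨hlam0, u, ⟨hucont, ⟨hsub, hsuper⟩, hubdry⟩, hupos⟩ := hlam
  set K := Metric.closedBall z R with hK_def
  have hKsub : K ⊆ closure Ω := hKΩ.trans subset_closure
  have hucK : ContinuousOn u K := hucont.mono hKsub
  have huposK : ∀ x ∈ K, 0 < u x := fun x hx => hupos x (hKsub hx)
  have hφub : ∀ x ∈ K, φ x ≤ R^4 := by
    intro x hx
    have h1 : ‖x - z‖ ≤ R := by
      rw [hK_def, Metric.mem_closedBall, dist_eq_norm] at hx; exact hx
    have h2 : 0 ≤ ‖x - z‖ := norm_nonneg _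
    have h3 : φ x = (R^2 - ‖x - z‖^2)^2 := by simp only [hφ_def]
    rw [h3]
    have h4 : ‖x - z‖^2 ≤ R^2 := by nlinarith
    nlinarith [mul_nonneg (mul_nonneg h2 h2) (by nlinarith : (0:ℝ) ≤ 2*R^2 - ‖x - z‖^2)]
  have hφz : φ z = R^4 := by
    have h3 : φ z = (R^2 - ‖z - z‖^2)^2 := by simp only [hφ_def]
    rw [h3]
    simp
    ring
  set S := {t : ℝ | 0 ≤ t ∧ ∀ x ∈ K, t * φ x ≤ u x} with hS_def
  have hzK : z ∈ K := Metric.mem_closedBall_self hR.le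
  have hR4 : (0:ℝ) < R^4 := by positivity
  have hSbdd : BddAbove S := by
    refine ⟨u z / R^4, fun t ht => ?_⟩
    have h1 := ht.2 z hzK
    rw [hφz] at h1
    exact (le_div_iff₀ hR4).2 h1
  obtain ⟨xm, hxm, hxmmin⟩ := (isCompact_closedBall z R).exists_isMinOn ⟨z, hzK⟩ hucK
  have hm : 0 < u xm := huposK xm hxm
  have hS1 : u xm / R^4 ∈ S := by
    constructor
    · positivity
    · intro x hx
      have h1 : u xm / R^4 * φ x ≤ u xm / R^4 * R^4 :=
        mul_le_mul_of_nonneg_left (hφub x hx) (by positivity)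
      have h2 : u xm / R^4 * R^4 = u xm := by field_simp
      have h3 := isMinOn_iff.1 hxmmin x hx
      linarith
  set T := sSup S with hT_def
  have hTpos : 0 < T := lt_of_lt_of_le (by positivity) (le_csSup hSbdd hS1)
  have hTle : ∀ x ∈ K, T * φ x ≤ u x := by
    intro x hx
    rcases eq_or_lt_of_le (hφ0 x) with h0 | h0
    · rw [← h0, mul_zero]; exact (huposK x hx).le
    · have hub : T ≤ u x / φ x :=
        csSup_le ⟨_, hS1⟩ (fun t ht => (le_div_iff₀ h0).2 (ht.2 x hx))
      exact (le_div_iff₀ h0).1 hub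
  have hφC : Continuous φ := by
    rw [hφ_def]
    exact (continuous_const.sub ((continuous_id.sub continuous_const).norm.pow 2)).pow 2
  have htouch : ∃ y ∈ K, u y = T * φ y := by
    by_contra hcon
    push_neg at hcon
    have hlt : ∀ x ∈ K, T * φ x < u x := fun x hx =>
      lt_of_le_of_ne (hTle x hx) (fun h => hcon x hx h.symm)
    obtain ⟨ym, hym, hymmin⟩ := (isCompact_closedBall z R).exists_isMinOn ⟨z, hzK⟩
      (hucK.sub (continuous_const.mul hφC).continuousOn)
    set ε' := u ym - T * φ ym with hε'_def
    have hε'pos : 0 < ε' := sub_pos.2 (hlt ym hym)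
    have hmem : T + ε' / R^4 ∈ S := by
      constructor
      · have : 0 < ε' / R^4 := div_pos hε'pos hR4
        linarith
      · intro x hx
        have h1 := isMinOn_iff.1 hymmin x hx
        have h2 : ε' / R^4 * φ x ≤ ε' := by
          have h3 := hφub x hx
          have h4 : ε' / R^4 * φ x ≤ ε' / R^4 * R^4 :=
            mul_le_mul_of_nonneg_left h3 (by positivity)
          have h5 : ε' / R^4 * R^4 = ε' := by field_simp
          linarith
        have h6 : u ym - T * φ ym ≤ u x - T * φ x := h1
        have h7 : ε' ≤ u x - T * φ x := by rw [hε'_def]; linarith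
        nlinarith [hφ0 x]
    have h8 := le_csSup hSbdd hmem
    have h9 : 0 < ε' / R^4 := div_pos hε'pos hR4
    linarith
  obtain ⟨y, hyK, huy⟩ := htouch
  have huy0 : 0 < u y := huposK y hyK
  have hφy : 0 < φ y := by
    rcases eq_or_lt_of_le (hφ0 y) with h0 | h0
    · exfalso
      rw [huy, ← h0, mul_zero] at huy0
      exact lt_irrefl 0 huy0
    · exact h0
  have hrly : ‖y - z‖ < R := by
    have h1 : ‖y - z‖ ≤ R := by
      rw [hK_def, Metric.mem_closedBall, dist_eq_norm] at hyK; exact hyK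
    rcases lt_or_eq_of_le h1 with h | h
    · exact h
    · exfalso
      have h3 : φ y = (R^2 - ‖y - z‖^2)^2 := by simp only [hφ_def]
      rw [h3, h] at hφy
      simp at hφy
  have hyΩ : y ∈ Ω := hKΩ hyK
  have hmin : IsLocalMin (fun x => u x - psiF T R z x) y := by
    have hball2 : Metric.ball z R ∈ nhds y :=
      Metric.isOpen_ball.mem_nhds (by rw [Metric.mem_ball, dist_eq_norm]; exact hrly)
    filter_upwards [hball2] with x hx
    have hxK : x ∈ K := Metric.ball_subset_closedBall hx
    have h1 := hTle x hxK
    show u y - psiF T R z y ≤ u x - psiF T R z x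
    have h2 : psiF T R z x = T * φ x := by simp only [hφ_def, psiF]
    have h3 : psiF T R z y = T * φ y := by simp only [hφ_def, psiF]
    rw [h2, h3, huy]
    linarith
  have happ := hsuper (psiF T R z) y hyΩ (contDiff_psiF T R z).contDiffAt hmin
  rw [gradient_psiF, hessianAt_psiF] at happ
  have hccT : ccF T R z y = T * cc y := by
    rw [hcc_def]
    show -(4*T) * (R^2 - ‖y - z‖^2) = T * (-(4*1) * (R^2 - ‖y - z‖^2))
    ring
  have hgradT : ccF T R z y • (y - z) = T • (cc y • (y - z)) := by
    rw [hccT]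
    exact (smul_smul T (cc y) (y - z)).symm
  have hhessT : (8*T) • outer (y - z) + ccF T R z y • (1:Mat n)
      = T • ((8*1:ℝ) • outer (y - z) + cc y • (1:Mat n)) := by
    rw [smul_add, smul_smul, smul_smul, hccT]
    congr 2
    ring
  rw [hgradT, hhessT, hBp, hBX T hTpos] at happ
  have hGyEq : H (cc y • (y - z)) ((8*1:ℝ) • outer (y - z) + cc y • (1 : Mat n)) = G y := by
    simp only [hG_def]
  rw [hGyEq] at happ
  have hky := hkey y hrly
  have hspow : spow (u y) (k₁ + k₂) = (u y) ^ (k₁ + k₂) := by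
    unfold spow
    have h := Real.rpow_add huy0 (k₁ + k₂ - 1) 1
    rw [Real.rpow_one] at h
    rw [abs_of_pos huy0]
    rw [show k₁ + k₂ - 1 + 1 = k₁ + k₂ by ring] at h
    exact h.symm
  simp only [] at happ
  rw [hspow, abs_of_pos hTpos] at happ
  have hTk : T ^ k₁ * T ^ k₂ = T ^ (k₁ + k₂) := (Real.rpow_add hTpos k₁ k₂).symm
  have hpow2 : T ^ (k₁+k₂) * (φ y) ^ (k₁+k₂) = (u y) ^ (k₁+k₂) := by
    rw [← Real.mul_rpow hTpos.le (hφ0 y), ← huy]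
  have hTk0 : 0 < T ^ (k₁+k₂) := Real.rpow_pos_of_pos hTpos _
  have huk0 : 0 < (u y) ^ (k₁+k₂) := Real.rpow_pos_of_pos huy0 _
  have h9 : T^(k₁+k₂) * (-(C * (φ y)^(k₁+k₂))) ≤ T^(k₁+k₂) * G y :=
    mul_le_mul_of_nonneg_left hky hTk0.le
  have h10 : T^(k₁+k₂) * (-(C * (φ y)^(k₁+k₂))) = -(C * (u y)^(k₁+k₂)) := by
    rw [← hpow2]; ring
  have h11 : T^k₁ * (T^k₂ * G y) = T^(k₁+k₂) * G y := by
    rw [← hTk]; ring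
  have h12 : lam * (a y * (u y)^(k₁+k₂)) ≤ C * (u y)^(k₁+k₂) := by nlinarith
  have hbdd : BddBelow (a '' Ω) := by
    by_contra hcon
    rw [Real.sInf_of_not_bddBelow hcon] at hainf
    exact lt_irrefl 0 hainf
  have hay : sInf (a '' Ω) ≤ a y := csInf_le hbdd ⟨y, hyΩ, rfl⟩
  have h13 : lam * sInf (a '' Ω) * (u y)^(k₁+k₂) ≤ C * (u y)^(k₁+k₂) := by
    have ha1 : lam * sInf (a '' Ω) ≤ lam * a y := mul_le_mul_of_nonneg_left hay hlam0.le
    have ha2 := mul_le_mul_of_nonneg_right ha1 huk0.le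
    calc lam * sInf (a '' Ω) * (u y)^(k₁+k₂) ≤ lam * a y * (u y)^(k₁+k₂) := ha2
      _ = lam * (a y * (u y)^(k₁+k₂)) := by ring
      _ ≤ C * (u y)^(k₁+k₂) := h12
  have h14 : lam * sInf (a '' Ω) ≤ C := le_of_mul_le_mul_right (by linarith) huk0
  exact (le_div_iff₀ hainf).2 h14

end AuxProof

/-- Finiteness of `λ_Ω` (Theorem 1.6). -/
theorem stmt_17 {n : ℕ} (hn : 2 ≤ n) (Ω : Set (EucSp n)) (hΩ : IsBoundedDomain Ω)
    (H : EucSp n → Mat n → ℝ) (hH : Continuous fun q : EucSp n × Mat n => H q.1 q.2)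
    (k₁ k₂ : ℝ) (hA : CondA H) (hB : CondB H k₁ k₂) (hC : CondC H k₁ k₂)
    (δ : ℝ) (hδ : 0 < δ)
    (a : EucSp n → ℝ) (ha : ContinuousOn a Ω)
    (hainf : 0 < sInf (a '' Ω)) (hasup : BddAbove (a '' Ω)) :
    (CondIStar H → BddAbove (eigenSet H Ω a (k₁ + k₂) δ)) ∧
    (CondIIStar H → (∃ ρ > (0 : ℝ), UnifOuterBall Ω ρ) → CondD H →
      BddAbove (eigenSet H Ω a (k₁ + k₂) δ)) := by
  have h := eigenSet_bddAbove Ω hΩ H hH k₁ k₂ hB hC δ a hainf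
  exact ⟨fun _ => h, fun _ _ _ => h⟩

end
end

section
/- Harnack inequality and Hölder continuity. Let H satisfy Conditions A, B and C, assume condition (i*) holds with 1 < s̄ < 2 and set β = 2−s̄ ∈ (0,1). Let a ∈ C(Ω)∩L^∞(Ω) with inf_Ω a > 0 and let λ ≥ 0. Suppose w ∈ lsc(Ω)∩L^∞(Ω), w ≥ 0, solves H(Dw,D²w)+λ a(x)|w|^{k−1}w ≤ 0 in Ω in the viscosity sense. Then there is a constant C > 0 depending only on β such that for every y ∈ Ω and R > 0 with B_{4R}(y) ⊂ Ω: sup_{B_R(y)} w ≤ C·inf_{B_R(y)} w, and |w(x)−w(z)| ≤ (3R)^{−β}·(sup_{B_R(y)} w)·|x−z|^β for all x, z ∈ B_R(y). -/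
open Real Set Filter Matrix MeasureTheory

noncomputable section

set_option maxHeartbeats 1000000
section AuxLemmas

theorem lsc_min {X : Type*} [TopologicalSpace X] {K : Set X} (hK : IsCompact K)
    (hne : K.Nonempty) {f : X → ℝ} (hf : LowerSemicontinuousOn f K) :
    ∃ x ∈ K, ∀ z ∈ K, f x ≤ f z := by
  by_contra h
  push_neg at h
  have h' : ∀ x : X, ∃ z : X, x ∈ K → z ∈ K ∧ f z < f x := by
    intro x
    by_cases hx : x ∈ K
    · obtain ⟨z, hz, hzx⟩ := h x hx
      exact ⟨z, fun _ => ⟨hz, hzx⟩⟩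
    · exact ⟨x, fun c => absurd c hx⟩
  choose g hg using h'
  have key : ∀ x : X, ∃ V : Set X, V ∈ nhds x ∧ (x ∈ K → ∀ x' ∈ V ∩ K, f (g x) < f x') := by
    intro x
    by_cases hx : x ∈ K
    · have h2 : {x' | f (g x) < f x'} ∈ nhdsWithin x K := hf x hx (f (g x)) (hg x hx).2
      obtain ⟨U, hUo, hxU, hU⟩ := mem_nhdsWithin.1 h2
      exact ⟨U, hUo.mem_nhds hxU, fun _ x' hx' => hU ⟨hx'.1, hx'.2⟩⟩
    · exact ⟨univ, Filter.univ_mem, fun c => absurd c hx⟩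
  choose V hV hVK using key
  obtain ⟨t, htK, hcov⟩ := hK.elim_nhds_subcover V (fun x _ => hV x)
  have htne : t.Nonempty := by
    obtain ⟨x, hx⟩ := hne
    obtain ⟨y, hy, -⟩ := Set.mem_iUnion₂.1 (hcov hx)
    exact ⟨y, hy⟩
  obtain ⟨x₀, hx₀t, hmin⟩ := t.exists_min_image (fun x => f (g x)) htne
  have hz₀K : g x₀ ∈ K := (hg x₀ (htK x₀ hx₀t)).1
  obtain ⟨x₁, hx₁t, hx₁V⟩ := Set.mem_iUnion₂.1 (hcov hz₀K)
  have := hVK x₁ (htK x₁ hx₁t) (g x₀) ⟨hx₁V, hz₀K⟩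
  exact absurd (hmin x₁ hx₁t) (not_le.2 this)


lemma aux_hq {n : ℕ} (z x : EucSp n) :
    HasFDerivAt (fun y : EucSp n => ‖y - z‖ ^ 2) ((2:ℝ) • innerSL ℝ (x - z)) x := by
  have h := ((hasFDerivAt_id x).sub_const z).norm_sq
  refine h.congr_fderiv ?_
  ext u
  simp [two_smul]

def Mmap (n : ℕ) : EucSp n →L[ℝ] (EucSp n →L[ℝ] ℝ) :=
  LinearMap.mkContinuous
    { toFun := fun u => (2:ℝ) • innerSL ℝ u
      map_add' := fun u v => by ext w; simp [inner_add_left]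
      map_smul' := fun r u => by ext w; simp [real_inner_smul_left]; ring }
    2 (fun u => by
      show ‖(2:ℝ) • innerSL ℝ u‖ ≤ 2 * ‖u‖
      rw [norm_smul (2:ℝ) (innerSL ℝ u), innerSL_apply_norm]
      norm_num)

example {n : ℕ} (u v : EucSp n) : Mmap n u v = 2 * (inner ℝ u v : ℝ) := by
  simp [Mmap]

example {n : ℕ} (i j : Fin n) :
    (inner ℝ (EuclideanSpace.single i (1:ℝ)) (EuclideanSpace.single j (1:ℝ)) : ℝ)
      = if i = j then 1 else 0 := by
  simp [EuclideanSpace.inner_single_left, EuclideanSpace.single_apply]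

example {n : ℕ} (v : EucSp n) (j : Fin n) :
    (inner ℝ v (EuclideanSpace.single j (1:ℝ)) : ℝ) = v j := by
  simp [EuclideanSpace.inner_single_right]

lemma barrier {n : ℕ} (z x₀ : EucSp n) (hne : x₀ ≠ z) (A c β : ℝ) (hβ0 : 0 < β) :
    ContDiffAt ℝ 2 (fun x => A - c * (‖x - z‖ ^ 2) ^ (β/2 : ℝ)) x₀ ∧
    gradient (fun x => A - c * (‖x - z‖ ^ 2) ^ (β/2 : ℝ)) x₀
      = (-(c * β * ‖x₀ - z‖ ^ (β - 2 : ℝ)) * ‖x₀ - z‖) • (‖x₀ - z‖⁻¹ • (x₀ - z)) ∧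
    hessianAt (fun x => A - c * (‖x - z‖ ^ 2) ^ (β/2 : ℝ)) x₀
      = (c * β * ‖x₀ - z‖ ^ (β - 2 : ℝ)) • ((2 - β) • outer (‖x₀ - z‖⁻¹ • (x₀ - z)) - 1) := by
  have hvne : x₀ - z ≠ 0 := sub_ne_zero.2 hne
  have hr : 0 < ‖x₀ - z‖ := norm_pos_iff.2 hvne
  set ψ : EucSp n → ℝ := fun x => A - c * (‖x - z‖ ^ 2) ^ (β/2 : ℝ) with hψdef
  set p : ℝ := β/2 with hp
  set Dq : EucSp n → (EucSp n →L[ℝ] ℝ) := fun x => (2:ℝ) • innerSL ℝ (x - z) with hDq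
  set s : EucSp n → ℝ := fun x => -(c * (p * (‖x - z‖ ^ 2) ^ (p - 1 : ℝ))) with hs
  have hq' : ∀ x : EucSp n, x ≠ z → (‖x - z‖ ^ 2 : ℝ) ≠ 0 := by
    intro x hx
    exact pow_ne_zero 2 (norm_ne_zero_iff.2 (sub_ne_zero.2 hx))
  have hψ' : ∀ x : EucSp n, x ≠ z → HasFDerivAt ψ (s x • Dq x) x := by
    intro x hx
    have h1 : HasDerivAt (fun t : ℝ => A - c * t ^ (p : ℝ))
        (-(c * (p * (‖x - z‖ ^ 2) ^ (p - 1 : ℝ)))) (‖x - z‖ ^ 2) := by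
      have := (Real.hasDerivAt_rpow_const (x := ‖x - z‖ ^ 2) (p := p) (Or.inl (hq' x hx)))
      exact (this.const_mul c).const_sub A
    have h2 := h1.comp_hasFDerivAt x (aux_hq z x)
    exact h2
  have hcd : ContDiffAt ℝ 2 ψ x₀ := by
    have h1 : ContDiffAt ℝ 2 (fun x : EucSp n => ‖x - z‖ ^ 2) x₀ :=
      (contDiffAt_id.sub contDiffAt_const).norm_sq ℝ
    have h2 : ContDiffAt ℝ 2 (fun x : EucSp n => (‖x - z‖ ^ 2) ^ (p : ℝ)) x₀ :=
      h1.rpow_const_of_ne (hq' x₀ hne)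
    exact contDiffAt_const.sub (contDiffAt_const.mul h2)
  refine ⟨hcd, ?_, ?_⟩
  · -- gradient
    have hCLM : (InnerProductSpace.toDual ℝ (EucSp n)) ((s x₀ * 2) • (x₀ - z)) = s x₀ • Dq x₀ := by
      ext u
      simp [InnerProductSpace.toDual_apply_apply, real_inner_smul_left, hDq]
      ring
    have hgrad : HasGradientAt ψ ((s x₀ * 2) • (x₀ - z)) x₀ := by
      rw [hasGradientAt_iff_hasFDerivAt, hCLM]
      exact hψ' x₀ hne
    rw [hgrad.gradient]
    rw [smul_smul, mul_inv_cancel_right₀ (ne_of_gt hr)]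
    congr 1
    have e1 : ((‖x₀ - z‖:ℝ)^2) ^ (p - 1 : ℝ) = ‖x₀ - z‖ ^ (β - 2 : ℝ) := by
      rw [← Real.rpow_natCast ‖x₀ - z‖ 2, ← Real.rpow_mul hr.le]
      congr 1
      push_cast
      rw [hp]; ring
    simp only [hs, e1]
    rw [hp]; ring
  · -- hessian
    have hev : fderiv ℝ ψ =ᶠ[nhds x₀] fun x => s x • Dq x := by
      filter_upwards [isOpen_ne.mem_nhds hne] with x hx
      exact (hψ' x hx).fderiv
    set s'₀ : ℝ := -(c * (p * ((p-1) * (‖x₀ - z‖ ^ 2) ^ (p - 2 : ℝ)))) with hs'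
    have hsder : HasFDerivAt s (s'₀ • Dq x₀) x₀ := by
      have h3 : HasDerivAt (fun t : ℝ => -(c * (p * t ^ (p - 1 : ℝ))))
          (-(c * (p * ((p-1) * (‖x₀ - z‖ ^ 2) ^ (p - 2 : ℝ))))) (‖x₀ - z‖ ^ 2) := by
        have h4 := (Real.hasDerivAt_rpow_const (x := ‖x₀ - z‖ ^ 2) (p := p - 1)
          (Or.inl (hq' x₀ hne)))
        have h5 : (p - 1 - 1 : ℝ) = p - 2 := by ring
        rw [h5] at h4
        exact ((h4.const_mul p).const_mul c).neg
      have h6 := h3.comp_hasFDerivAt x₀ (aux_hq z x₀)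
      exact h6
    have hMder : HasFDerivAt (fun x : EucSp n => Dq x) (Mmap n) x₀ := by
      have heq : (fun x : EucSp n => Dq x) = fun x : EucSp n => Mmap n x - Mmap n z := by
        funext x
        rw [← map_sub]
        rfl
      rw [heq]
      exact (Mmap n).hasFDerivAt.sub_const (Mmap n z)
    have hDD : HasFDerivAt (fun x : EucSp n => s x • Dq x)
        (s x₀ • Mmap n + (s'₀ • Dq x₀).smulRight (Dq x₀)) x₀ := hsder.smul hMder
    funext i j
    show iteratedFDeriv ℝ 2 ψ x₀ ![EuclideanSpace.single i 1, EuclideanSpace.single j 1] = _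
    rw [iteratedFDeriv_two_apply]
    rw [hev.fderiv_eq, hDD.fderiv]
    have e3 : (‖x₀ - z‖:ℝ) ^ (β - 2 : ℝ) = ‖x₀ - z‖ ^ (β - 4 : ℝ) * ‖x₀ - z‖ ^ 2 := by
      rw [← Real.rpow_natCast ‖x₀ - z‖ 2, ← Real.rpow_add hr]
      congr 1
      push_cast; ring
    have eA : ((‖x₀ - z‖:ℝ)^2) ^ (p - 1 : ℝ) = ‖x₀ - z‖ ^ (β - 4 : ℝ) * ‖x₀ - z‖ ^ 2 := by
      rw [← e3, ← Real.rpow_natCast ‖x₀ - z‖ 2, ← Real.rpow_mul hr.le]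
      congr 1
      push_cast
      rw [hp]; ring
    have e2 : ((‖x₀ - z‖:ℝ)^2) ^ (p - 2 : ℝ) = ‖x₀ - z‖ ^ (β - 4 : ℝ) := by
      rw [← Real.rpow_natCast ‖x₀ - z‖ 2, ← Real.rpow_mul hr.le]
      congr 1
      push_cast
      rw [hp]; ring
    simp only [Matrix.cons_val_zero, Matrix.cons_val_one, Matrix.head_cons,
      ContinuousLinearMap.add_apply, ContinuousLinearMap.smul_apply,
      ContinuousLinearMap.smulRight_apply, Matrix.smul_apply, Matrix.sub_apply,
      Matrix.one_apply, outer, PiLp.smul_apply, smul_eq_mul]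
    simp only [Mmap, hDq, hs, hs', LinearMap.mkContinuous_apply, LinearMap.coe_mk, AddHom.coe_mk,
      ContinuousLinearMap.smul_apply, smul_eq_mul, innerSL_apply_apply]
    have eA' : ((‖x₀ - z‖:ℝ)^2) ^ (β/2 - 1 : ℝ) = ‖x₀ - z‖ ^ (β - 4 : ℝ) * ‖x₀ - z‖ ^ 2 := by
      rw [← hp]; exact eA
    have e2' : ((‖x₀ - z‖:ℝ)^2) ^ (β/2 - 2 : ℝ) = ‖x₀ - z‖ ^ (β - 4 : ℝ) := by
      rw [← hp]; exact e2
    simp only [EuclideanSpace.inner_single_right, EuclideanSpace.inner_single_left,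
      conj_trivial, _root_.map_one, one_mul, EuclideanSpace.single_apply, eA, e2, e3, hp, eA', e2']
    by_cases hij : i = j
    · simp only [hij, if_true]
      field_simp
      ring
    · have h1 : (if j = i then (1:ℝ) else 0) = 0 := by simp [Ne.symm hij]
      have h2 : (if i = j then (1:ℝ) else 0) = 0 := by simp [hij]
      simp only [h1, h2, mul_zero, zero_sub]
      field_simp
      ring

end AuxLemmas

/-- Harnack inequality and Hölder continuity (Lemma 10.1). -/
theorem stmt_18 {n : ℕ} (hn : 2 ≤ n) (Ω : Set (EucSp n)) (hΩ : IsBoundedDomain Ω)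
    (H : EucSp n → Mat n → ℝ) (hH : Continuous fun q : EucSp n × Mat n => H q.1 q.2)
    (k₁ k₂ : ℝ) (hA : CondA H) (hB : CondB H k₁ k₂) (hC : CondC H k₁ k₂)
    (sb : ℝ) (hsb1 : 1 < sb) (hsb2 : sb < 2) (hm2 : m2 H sb < 0)
    (β : ℝ) (hβ : β = 2 - sb)
    (a : EucSp n → ℝ) (ha : ContinuousOn a Ω)
    (hainf : 0 < sInf (a '' Ω)) (hasup : BddAbove (a '' Ω))
    (lam : ℝ) (hlam : 0 ≤ lam)
    (w : EucSp n → ℝ) (hwl : LowerSemicontinuousOn w Ω)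
    (hwb : ∃ M : ℝ, ∀ x ∈ Ω, |w x| ≤ M) (hw0 : ∀ x ∈ Ω, 0 ≤ w x)
    (hsuper : ViscSuperSoln H (fun x t => lam * a x * spow t (k₁ + k₂)) Ω w) :
    ∃ C > (0 : ℝ), ∀ y ∈ Ω, ∀ R : ℝ, 0 < R → Metric.ball y (4 * R) ⊆ Ω →
      sSup (w '' Metric.ball y R) ≤ C * sInf (w '' Metric.ball y R) ∧
      ∀ x ∈ Metric.ball y R, ∀ z ∈ Metric.ball y R,
        |w x - w z| ≤ (3 * R) ^ (-β) * sSup (w '' Metric.ball y R) * ‖x - z‖ ^ β := by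
  have hβ0 : 0 < β := by rw [hβ]; linarith
  have hq23 : (0:ℝ) < 1 - (2/3 : ℝ) ^ (β:ℝ) := by
    have : (2/3 : ℝ) ^ (β:ℝ) < 1 := Real.rpow_lt_one (by norm_num) (by norm_num) hβ0
    linarith
  have habb : BddBelow (a '' Ω) := by
    by_contra hb
    rw [Real.sInf_of_not_bddBelow hb] at hainf
    exact lt_irrefl _ hainf
  have ha_pos : ∀ u ∈ Ω, 0 < a u := fun u hu =>
    lt_of_lt_of_le hainf (csInf_le habb ⟨u, hu, rfl⟩)
  set T : Set ℝ := {r : ℝ | ∃ e : EucSp n, ‖e‖ = 1 ∧ r = H e (sb • outer e - 1)} with hT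
  have hTbdd : BddBelow T := by
    have himg : T = (fun e : EucSp n => H e (sb • outer e - 1)) '' Metric.sphere 0 1 := by
      ext t
      constructor
      · rintro ⟨e, he, rfl⟩
        exact ⟨e, mem_sphere_zero_iff_norm.2 he, rfl⟩
      · rintro ⟨e, he, rfl⟩
        exact ⟨e, mem_sphere_zero_iff_norm.1 he, rfl⟩
    have hcont2 : Continuous fun e : EucSp n => H e (sb • outer e - 1) := by
      have hmat : Continuous fun e : EucSp n => (sb • outer e - 1 : Mat n) := by
        apply continuous_pi; intro i
        apply continuous_pi; intro j
        show Continuous fun e : EucSp n => (sb • outer e - 1 : Mat n) i j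
        have heq : (fun e : EucSp n => (sb • outer e - 1 : Mat n) i j)
            = fun e : EucSp n => sb * (EuclideanSpace.proj i e * EuclideanSpace.proj j e)
                - (1 : Mat n) i j := by
          funext e
          simp only [Matrix.sub_apply, Matrix.smul_apply, outer, smul_eq_mul]
          rfl
        rw [heq]
        exact ((continuous_const.mul (((EuclideanSpace.proj i).continuous).mul
          ((EuclideanSpace.proj j).continuous))).sub continuous_const)
      exact hH.comp (continuous_id.prodMk hmat)
    rw [himg]
    exact ((isCompact_sphere 0 1).image hcont2).bddBelow
  have hTinf : 0 < sInf T := by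
    unfold m2 at hm2
    have := lt_of_le_of_lt (le_max_right
      (sSup {r | ∃ e : EucSp n, ‖e‖ = 1 ∧ r = H e (1 - sb • outer e)}) (-sInf T)) hm2
    linarith
  refine ⟨(1 - (2/3 : ℝ) ^ (β:ℝ))⁻¹, inv_pos.2 hq23, ?_⟩
  intro y hy R hR h4R
  obtain ⟨M, hM⟩ := hwb
  set B := Metric.ball y R with hBball
  have hBsub : B ⊆ Ω := subset_trans (Metric.ball_subset_ball (by linarith)) h4R
  have hBne : B.Nonempty := Metric.nonempty_ball.2 hR
  have himgne : (w '' B).Nonempty := hBne.image w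
  have hbdd : BddAbove (w '' B) := by
    refine ⟨M, ?_⟩
    rintro t ⟨x, hx, rfl⟩
    exact (abs_le.1 (hM x (hBsub hx))).2
  set S := sSup (w '' B) with hSdef
  have hS_ge : ∀ x ∈ B, w x ≤ S := fun x hx => le_csSup hbdd ⟨x, hx, rfl⟩
  have hS0 : 0 ≤ S := by
    obtain ⟨x, hx⟩ := hBne
    exact le_trans (hw0 x (hBsub hx)) (hS_ge x hx)
  have h3R : (0:ℝ) < 3 * R := by linarith
  have hnorm : ∀ u v : EucSp n, ((‖u - v‖:ℝ)^2) ^ (β/2 : ℝ) = ‖u - v‖ ^ (β:ℝ) := by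
    intro u v
    rw [← Real.rpow_natCast ‖u - v‖ 2, ← Real.rpow_mul (norm_nonneg _)]
    congr 1
    push_cast
    ring
  have KEY : ∀ z ∈ B, ∀ x ∈ Metric.closedBall z (3*R),
      w z - (3*R) ^ (-β : ℝ) * S * ‖x - z‖ ^ (β:ℝ) ≤ w x := by
    intro z hz x hx
    set K := Metric.closedBall z (3*R) with hKdef
    have hKsub : K ⊆ Ω := by
      intro u hu
      apply h4R
      have h1 : dist u z ≤ 3*R := Metric.mem_closedBall.1 hu
      have h2 : dist z y < R := Metric.mem_ball.1 hz
      have h3 : dist u y < 4 * R := lt_of_le_of_lt (dist_triangle u z y) (by linarith)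
      exact Metric.mem_ball.2 h3
    rcases eq_or_lt_of_le hS0 with hS | hSpos
    · have h1 : w z ≤ S := hS_ge z hz
      have h2 : 0 ≤ w x := hw0 x (hKsub hx)
      have h3 : 0 ≤ (3*R) ^ (-β : ℝ) * S * ‖x - z‖ ^ (β:ℝ) :=
        mul_nonneg (mul_nonneg (Real.rpow_nonneg (by linarith) _) hS0)
          (Real.rpow_nonneg (norm_nonneg _) _)
      rw [← hS] at h1
      linarith
    · set c : ℝ := (3*R) ^ (-β : ℝ) * S with hc
      have hcpos : 0 < c := mul_pos (Real.rpow_pos_of_pos h3R _) hSpos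
      set ψ : EucSp n → ℝ := fun u => w z - c * (‖u - z‖^2) ^ (β/2 : ℝ) with hψ
      have hψcont : Continuous ψ := by
        have hrp : Continuous fun t : ℝ => t ^ (β/2 : ℝ) := by
          rw [continuous_iff_continuousAt]
          intro t
          exact Real.continuousAt_rpow_const t _ (Or.inr (by positivity))
        exact continuous_const.sub (continuous_const.mul
          (hrp.comp (((continuous_id.sub continuous_const).norm).pow 2)))
      have hlsc : LowerSemicontinuousOn (fun u => w u - ψ u) K := by
        have h1 : LowerSemicontinuousOn w K := hwl.mono hKsub
        have h2 : LowerSemicontinuousOn (fun u => -ψ u) K :=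
          (hψcont.neg.lowerSemicontinuous).lowerSemicontinuousOn K
        have h3 := h1.add h2
        simpa [sub_eq_add_neg] using h3
      obtain ⟨y₀, hy₀K, hy₀min⟩ := lsc_min (isCompact_closedBall z (3*R))
        ⟨z, Metric.mem_closedBall_self (by linarith)⟩ hlsc
      have hmin0 : 0 ≤ w y₀ - ψ y₀ := by
        by_contra hneg
        push_neg at hneg
        have hy₀z : y₀ ≠ z := by
          intro h
          rw [h] at hneg
          have hψz : ψ z = w z := by
            simp [hψ, Real.zero_rpow (by positivity : (β/2 : ℝ) ≠ 0)]
          rw [hψz] at hneg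
          linarith
        have hy₀sph : dist y₀ z < 3*R := by
          rcases lt_or_eq_of_le (Metric.mem_closedBall.1 hy₀K) with h | h
          · exact h
          · exfalso
            have hnn : ‖y₀ - z‖ = 3*R := by rw [← dist_eq_norm]; exact h
            have hX : (3*R) ^ (-β:ℝ) * S * (3*R) ^ (β:ℝ) = S := by
              rw [mul_comm ((3*R) ^ (-β:ℝ)) S, mul_assoc, ← Real.rpow_add h3R]
              simp
            have hψy₀ : ψ y₀ = w z - S := by
              show w z - c * ((‖y₀ - z‖:ℝ)^2) ^ (β/2 : ℝ) = w z - S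
              rw [hnorm y₀ z, hnn, hc, hX]
            have h0 : 0 ≤ w y₀ := hw0 y₀ (hKsub hy₀K)
            have h1 : w z ≤ S := hS_ge z hz
            rw [hψy₀] at hneg
            linarith
        obtain ⟨hcd, hgrad, hhess⟩ := barrier z y₀ hy₀z (w z) c β hβ0
        have hlocmin : IsLocalMin (fun u => w u - ψ u) y₀ := by
          apply IsMinOn.isLocalMin _ (Metric.closedBall_mem_nhds_of_mem
            (Metric.mem_ball.2 hy₀sph))
          exact (isMinOn_iff).2 fun u hu => hy₀min u hu
        have hvisc : H (gradient ψ y₀) (hessianAt ψ y₀)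
            + lam * a y₀ * spow (w y₀) (k₁ + k₂) ≤ 0 :=
          hsuper ψ y₀ (hKsub hy₀K) hcd hlocmin
        set r₀ : ℝ := ‖y₀ - z‖ with hr₀
        have hr₀pos : 0 < r₀ := norm_pos_iff.2 (sub_ne_zero.2 hy₀z)
        set e : EucSp n := r₀⁻¹ • (y₀ - z) with he
        have henorm : ‖e‖ = 1 := by
          rw [he, norm_smul, norm_inv, norm_norm, ← hr₀, inv_mul_cancel₀ (ne_of_gt hr₀pos)]
        set μ : ℝ := c * β * r₀ ^ (β - 2 : ℝ) with hμ
        have hμpos : 0 < μ :=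
          mul_pos (mul_pos hcpos hβ0) (Real.rpow_pos_of_pos hr₀pos _)
        set θ : ℝ := -μ * r₀ with hθ
        have hθne : θ ≠ 0 := by
          rw [hθ]
          exact mul_ne_zero (neg_ne_zero.2 (ne_of_gt hμpos)) (ne_of_gt hr₀pos)
        have h2β : (2 : ℝ) - β = sb := by rw [hβ]; ring
        have hgrad' : gradient ψ y₀ = θ • e := by
          rw [hgrad]
        have hhess' : hessianAt ψ y₀ = μ • (sb • outer e - 1) := by
          rw [hhess, h2β]
        have hHval : H (gradient ψ y₀) (hessianAt ψ y₀)
            = |θ| ^ (k₁:ℝ) * (μ ^ (k₂:ℝ) * H e (sb • outer e - 1)) := by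
          rw [hgrad', hhess', hB.2.2.1 θ e, hB.2.2.2 μ hμpos]
        have hHpos : 0 < H (gradient ψ y₀) (hessianAt ψ y₀) := by
          rw [hHval]
          apply mul_pos (Real.rpow_pos_of_pos (abs_pos.2 hθne) _)
          apply mul_pos (Real.rpow_pos_of_pos hμpos _)
          exact lt_of_lt_of_le hTinf (csInf_le hTbdd ⟨e, henorm, rfl⟩)
        have hfnonneg : 0 ≤ lam * a y₀ * spow (w y₀) (k₁ + k₂) := by
          apply mul_nonneg (mul_nonneg hlam (le_of_lt (ha_pos y₀ (hKsub hy₀K))))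
          unfold spow
          exact mul_nonneg (Real.rpow_nonneg (abs_nonneg _) _) (hw0 y₀ (hKsub hy₀K))
        linarith
      have hge := le_trans hmin0 (hy₀min x hx)
      have hψx : ψ x = w z - c * ‖x - z‖ ^ (β:ℝ) := by
        show w z - c * ((‖x - z‖:ℝ)^2) ^ (β/2 : ℝ) = _
        rw [hnorm x z]
      rw [hψx] at hge
      linarith
  constructor
  · -- Harnack
    have key2 : ∀ z ∈ B, (1 - (2/3 : ℝ) ^ (β:ℝ)) * S ≤ w z := by
      intro z hz
      have hsup : S ≤ w z + (2/3 : ℝ) ^ (β:ℝ) * S := by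
        apply csSup_le himgne
        rintro t ⟨x, hx, rfl⟩
        have hxK : z ∈ Metric.closedBall x (3*R) := by
          have h1 : dist z y < R := Metric.mem_ball.1 hz
          have h3 : dist y x < R := by rw [dist_comm]; exact Metric.mem_ball.1 hx
          exact Metric.mem_closedBall.2 (by linarith [dist_triangle z y x])
        have hK2 := KEY x hx z hxK
        have hle : (3*R) ^ (-β : ℝ) * S * ‖z - x‖ ^ (β:ℝ) ≤ (2/3 : ℝ) ^ (β:ℝ) * S := by
          have h1 : ‖z - x‖ ≤ 2*R := by
            rw [← dist_eq_norm]
            have h2 : dist z y < R := Metric.mem_ball.1 hz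
            have h3 : dist y x < R := by rw [dist_comm]; exact Metric.mem_ball.1 hx
            linarith [dist_triangle z y x]
          have h2 : ‖z - x‖ ^ (β:ℝ) ≤ (2*R) ^ (β:ℝ) :=
            Real.rpow_le_rpow (norm_nonneg _) h1 hβ0.le
          have h3 : (3*R) ^ (-β : ℝ) * (2*R) ^ (β:ℝ) = (2/3 : ℝ) ^ (β:ℝ) := by
            rw [Real.rpow_neg h3R.le, inv_mul_eq_div,
              ← Real.div_rpow (by linarith : (0:ℝ) ≤ 2*R) h3R.le]
            congr 1
            field_simp
          calc (3*R) ^ (-β : ℝ) * S * ‖z - x‖ ^ (β:ℝ)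
              ≤ (3*R) ^ (-β : ℝ) * S * (2*R) ^ (β:ℝ) := by
                apply mul_le_mul_of_nonneg_left h2
                exact mul_nonneg (Real.rpow_nonneg h3R.le _) hS0
            _ = (2/3 : ℝ) ^ (β:ℝ) * S := by rw [mul_right_comm, h3]
        linarith
      linarith
    have hinf : (1 - (2/3 : ℝ) ^ (β:ℝ)) * S ≤ sInf (w '' B) := by
      apply le_csInf himgne
      rintro t ⟨z, hz, rfl⟩
      exact key2 z hz
    rw [← div_eq_inv_mul, le_div_iff₀ hq23]
    nlinarith [hinf]
  · -- Hölder
    intro x hx z hz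
    have hxK : x ∈ Metric.closedBall z (3*R) := by
      have h1 : dist x y < R := Metric.mem_ball.1 hx
      have h2 : dist y z < R := by rw [dist_comm]; exact Metric.mem_ball.1 hz
      exact Metric.mem_closedBall.2 (by linarith [dist_triangle x y z])
    have hzK : z ∈ Metric.closedBall x (3*R) := by
      have h1 : dist y x < R := by rw [dist_comm]; exact Metric.mem_ball.1 hx
      have h2 : dist z y < R := Metric.mem_ball.1 hz
      exact Metric.mem_closedBall.2 (by linarith [dist_triangle z y x])
    have h1 := KEY z hz x hxK
    have h2 := KEY x hx z hzK
    have hns : ‖z - x‖ = ‖x - z‖ := norm_sub_rev z x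
    rw [hns] at h2
    rw [abs_sub_le_iff]
    constructor
    · linarith
    · linarith


end
end
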